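/- arXiv:1501.06599 — 3 statements merged into one kernel-verified Lean document; each statement's English description precedes it below -/
import Mathlib

section
/- Let 1 ≤ k ≤ n and f ∈ F_+^{k:n}(I). Then for each j ∈ {k, …, n}: the limit f^{(j)}(a+) := lim_{x ↓ a} f^{(j)}(x) exists in [0, ∞); f^{(i)}(a+) = 0 for every i ∈ {j, …, n} such that p_{a;j,i} is identically +∞ on I; and for every x ∈ I, f^{(j)}(x)·w_j(x) = Σ_{i=j}^n f^{(i)}(a+)·p_{a;j,i}(x) + ∫_I p^+_{t;j,n}(x) d f^{(n)}(t), where d f^{(n)} is the Lebesgue–Stieltjes measure on I of the nondecreasing right-continuous-on-I∖{b} function f^{(n)}, and the conventions 0·∞ = 0 and ∞·0 = 0 are used (so that every summand and the integral are finite and nonnegative). -/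
open MeasureTheory Set Filter
open scoped ENNReal

noncomputable section

/-- `g` is right-continuous at every point of `I` that is not the greatest point of `I`,
and left-continuous at the greatest point of `I` when the latter exists (the class `LD`). -/
def IsLD (I : Set ℝ) (g : ℝ → ℝ) : Prop :=
  (∀ x ∈ I, (∃ y ∈ I, x < y) → Tendsto g (nhdsWithin x (I ∩ Ioi x)) (nhds (g x))) ∧
  (∀ x ∈ I, (∀ y ∈ I, y ≤ x) → Tendsto g (nhdsWithin x (I ∩ Iio x)) (nhds (g x)))

/-- `d 0, …, d n` is the system of generalized derivatives of `f` on `I` with respect to the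
gauge sequence `w`; i.e., `f ∈ L^n` with `f^{(j)} = d j` for `j = 0, …, n`. -/
structure IsGenL (I : Set ℝ) (w : ℕ → ℝ → ℝ) (n : ℕ) (f : ℝ → ℝ) (d : ℕ → ℝ → ℝ) : Prop where
  base : ∀ x ∈ I, f x = d 0 x * w 0 x
  ld : IsLD I (d n)
  integrable : ∀ j < n, ∀ z ∈ I, ∀ x ∈ I,
    IntervalIntegrable (fun u => d (j + 1) u * w (j + 1) u) volume z x
  deriv_eq : ∀ j < n, ∀ z ∈ I, ∀ x ∈ I,
    d j x = d j z + ∫ u in z..x, d (j + 1) u * w (j + 1) u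

/-- `f ∈ F_+^{k:n}(I)` (with derivative system `d`): all the generalized derivatives
`f^{(j)} = d j` of orders `j = k-1, …, n` are nondecreasing on `I`. -/
def MemF (I : Set ℝ) (w : ℕ → ℝ → ℝ) (k n : ℕ) (f : ℝ → ℝ) (d : ℕ → ℝ → ℝ) : Prop :=
  IsGenL I w n f d ∧ ∀ j, k - 1 ≤ j → j ≤ n → MonotoneOn (d j) I

/-- `w` is a sequence of positive, Borel-measurable, locally bounded gauge functions on `I`. -/
def IsGauge (I : Set ℝ) (w : ℕ → ℝ → ℝ) : Prop :=
  ∀ j, (∀ x ∈ I, 0 < w j x) ∧ Measurable (fun x : I => w j x) ∧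
    ∀ K ⊆ I, IsCompact K → ∃ C, ∀ x ∈ K, |w j x| ≤ C

def pAux (w : ℕ → ℝ → ℝ) (t : ℝ) (m : ℕ) : ℕ → ℝ → ℝ
  | 0 => w m
  | (i + 1) => fun x => w (m - (i + 1)) x * ∫ u in t..x, pAux w t m i u

/-- The `w`-polynomial `p_{t;j,m}` (for `t ∈ I`). -/
def pfun (w : ℕ → ℝ → ℝ) (t : ℝ) (j m : ℕ) : ℝ → ℝ := pAux w t m (m - j)

/-- The "positive part" `p^+_{t;j,m}`. -/
def pplus (w : ℕ → ℝ → ℝ) (t : ℝ) (j m : ℕ) : ℝ → ℝ := fun x =>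
  if t ≤ x then pfun w t j m x else 0

def pAuxE (w : ℕ → ℝ → ℝ) (I : Set ℝ) (m : ℕ) : ℕ → ℝ → ℝ≥0∞
  | 0 => fun x => ENNReal.ofReal (w m x)
  | (i + 1) => fun x =>
      ENNReal.ofReal (w (m - (i + 1)) x) * ∫⁻ u in I ∩ Iio x, pAuxE w I m i u

/-- `p_{a;j,m} : I → [0, ∞]`, where `a` is the left endpoint of `I` (the integrals from `a`
are taken over `(a, x) ∩ I = I ∩ Iio x`). -/
def pE (w : ℕ → ℝ → ℝ) (I : Set ℝ) (j m : ℕ) : ℝ → ℝ≥0∞ := pAuxE w I m (m - j)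

/-- The filter of `x ↓ a` within `I`, `a` being the left endpoint of `I`. -/
def leftEndFilter (I : Set ℝ) : Filter ℝ := ⨅ c ∈ I, Filter.principal (I ∩ Iic c)

/-- `ν(f) = ∫_I f dν ∈ [−∞, ∞]`. -/
def nuEval (ν : Measure ℝ) (I : Set ℝ) (f : ℝ → ℝ) : EReal :=
  ((∫⁻ x in I, ENNReal.ofReal (f x) ∂ν : ℝ≥0∞) : EReal)
    - ((∫⁻ x in I, ENNReal.ofReal (-f x) ∂ν : ℝ≥0∞) : EReal)

/-- The expectation `E g ∈ [−∞, ∞]` (in the extended sense). -/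
def eval' {α : Type*} [MeasurableSpace α] (P : Measure α) (g : α → ℝ) : EReal :=
  ((∫⁻ a, ENNReal.ofReal (g a) ∂P : ℝ≥0∞) : EReal)
    - ((∫⁻ a, ENNReal.ofReal (-g a) ∂P : ℝ≥0∞) : EReal)

lemma runmin {S : Set ℝ} (u' : ℕ → ℝ) (hu' : ∀ m, u' m ∈ S) :
    ∃ u : ℕ → ℝ, Antitone u ∧ (∀ m, u m ∈ S) ∧ ∀ m, u m ≤ u' m := by
  refine ⟨fun m => Nat.rec (u' 0) (fun i prev => min (u' (i+1)) prev) m, ?_, ?_, ?_⟩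
  · apply antitone_nat_of_succ_le
    intro m
    exact min_le_right _ _
  · intro m
    induction m with
    | zero => exact hu' 0
    | succ i ih =>
      rcases min_cases (u' (i+1)) (Nat.rec (u' 0) (fun i prev => min (u' (i+1)) prev) i) with h | h
      · simpa [h.1] using hu' (i+1)
      · simpa [h.1] using ih
  · intro m
    cases m with
    | zero => exact le_rfl
    | succ i => exact min_le_left _ _

lemma exists_cofinal_below (S : Set ℝ) (hS : S.Nonempty) :
    ∃ u : ℕ → ℝ, Antitone u ∧ (∀ m, u m ∈ S) ∧ ∀ y ∈ S, ∃ m, u m ≤ y := by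
  by_cases hleast : ∃ m0, IsLeast S m0
  · obtain ⟨m0, hm0⟩ := hleast
    exact ⟨fun _ => m0, antitone_const, fun _ => hm0.1, fun y hy => ⟨0, hm0.2 hy⟩⟩
  by_cases hbdd : BddBelow S
  · obtain ⟨u, hua, hut, hus⟩ := exists_seq_tendsto_sInf hS hbdd
    refine ⟨u, hua, hus, fun y hy => ?_⟩
    have hsy : sInf S < y := by
      rcases lt_or_eq_of_le (csInf_le hbdd hy) with h | h
      · exact h
      · exact absurd ⟨sInf S, h ▸ hy, fun z hz => csInf_le hbdd hz⟩ hleast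
    have := hut.eventually (tendsto_id.eventually_lt_const hsy)
    obtain ⟨m, hm⟩ := this.exists
    exact ⟨m, hm.le⟩
  · have h : ∀ m : ℕ, ∃ s ∈ S, s < -(m : ℝ) := by
      intro m
      by_contra hc
      push_neg at hc
      exact hbdd ⟨-(m : ℝ), fun s hs => hc s hs⟩
    choose u' hu'S hu'lt using h
    obtain ⟨u, hua, huS, hule⟩ := runmin u' hu'S
    refine ⟨u, hua, huS, fun y hy => ?_⟩
    obtain ⟨m, hm⟩ := exists_nat_gt (-y)
    exact ⟨m, (hule m).trans ((hu'lt m).le.trans (by linarith))⟩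

lemma exists_cofinal_above (S : Set ℝ) (hS : S.Nonempty) :
    ∃ v : ℕ → ℝ, Monotone v ∧ (∀ m, v m ∈ S) ∧ ∀ y ∈ S, ∃ m, y ≤ v m := by
  obtain ⟨u, hua, huS, hule⟩ := exists_cofinal_below ((fun x : ℝ => -x) '' S)
    (hS.image _)
  refine ⟨fun m => -(u m), fun a b hab => neg_le_neg (hua hab), fun m => ?_, fun y hy => ?_⟩
  · obtain ⟨s, hs, hsu⟩ := huS m
    simpa [← hsu] using hs
  · obtain ⟨m, hm⟩ := hule (-y) ⟨y, hy, rfl⟩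
    exact ⟨m, le_neg_of_le_neg hm⟩
open Classical in
/-- extension of `w j` by `0` off `I`. -/
noncomputable def wex (w : ℕ → ℝ → ℝ) (I : Set ℝ) (j : ℕ) : ℝ → ℝ := fun x =>
  if h : x ∈ I then w j x else 0

lemma wex_measurable {I : Set ℝ} {w : ℕ → ℝ → ℝ} (hIm : MeasurableSet I)
    (hw : IsGauge I w) (j : ℕ) : Measurable (wex w I j) := by
  classical
  exact Measurable.dite (hw j).2.1 measurable_const hIm

lemma wex_eqOn {I : Set ℝ} (w : ℕ → ℝ → ℝ) (j : ℕ) : EqOn (w j) (wex w I j) I := by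
  intro x hx
  simp [wex, hx]

lemma w_aesm {I : Set ℝ} {w : ℕ → ℝ → ℝ} (hIm : MeasurableSet I) (hw : IsGauge I w)
    (j : ℕ) {S : Set ℝ} (hSm : MeasurableSet S) (hSI : S ⊆ I) :
    AEStronglyMeasurable (w j) (volume.restrict S) := by
  refine ((wex_measurable hIm hw j).aestronglyMeasurable).congr ?_
  exact (ae_restrict_of_forall_mem hSm fun x hx => ((wex_eqOn w j) (hSI hx)).symm)

lemma w_intInt {I : Set ℝ} (hI : I.OrdConnected) {w : ℕ → ℝ → ℝ} (hw : IsGauge I w)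
    (j : ℕ) {z x : ℝ} (hz : z ∈ I) (hx : x ∈ I) (hzx : z ≤ x) :
    IntervalIntegrable (w j) volume z x := by
  obtain ⟨C, hC⟩ := (hw j).2.2 (Icc z x) (hI.out hz hx) isCompact_Icc
  rw [intervalIntegrable_iff_integrableOn_Ioc_of_le hzx]
  refine (integrable_const C).mono' ?_ ?_
  · exact w_aesm (hI.measurableSet) hw j measurableSet_Ioc
      (fun u hu => hI.out hz hx ⟨hu.1.le, hu.2⟩)
  · exact ae_restrict_of_forall_mem measurableSet_Ioc
      (fun u hu => by simpa using hC u ⟨hu.1.le, hu.2⟩)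

section main
variable {I : Set ℝ} {w : ℕ → ℝ → ℝ} {k n : ℕ} {f : ℝ → ℝ} {d : ℕ → ℝ → ℝ}

lemma d_nonneg_of_lt (hI : I.OrdConnected) (hw : IsGauge I w) (hk : 1 ≤ k)
    (hf : MemF I w k n f d) {i : ℕ} (hki : k ≤ i) (hin : i ≤ n)
    {z x : ℝ} (hz : z ∈ I) (hx : x ∈ I) (hzx : z < x) : 0 ≤ d i x := by
  by_contra hneg
  push_neg at hneg
  have hzi : Icc z x ⊆ I := hI.out hz hx
  have hi1 : i - 1 + 1 = i := Nat.succ_pred_eq_of_pos (hk.trans hki)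
  have hi1n : i - 1 < n := by omega
  have hderiv := hf.1.deriv_eq (i-1) hi1n z hz x hx
  rw [hi1] at hderiv
  have hInt1 : IntervalIntegrable (fun u => d i u * w i u) volume z x := by
    have := hf.1.integrable (i-1) hi1n z hz x hx
    rwa [hi1] at this
  have hwInt : IntervalIntegrable (w i) volume z x := w_intInt hI hw i hz hx hzx.le
  have mono_i := hf.2 i (by omega) hin
  have hmono_int : (∫ u in z..x, d i u * w i u) ≤ ∫ u in z..x, d i x * w i u := by
    refine intervalIntegral.integral_mono_on hzx.le hInt1 (hwInt.const_mul _) ?_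
    intro u hu
    exact mul_le_mul_of_nonneg_right (mono_i (hzi hu) hx hu.2)
      ((hw i).1 u (hzi hu)).le
  have hwpos : 0 < ∫ u in z..x, w i u :=
    intervalIntegral.intervalIntegral_pos_of_pos_on hwInt
      (fun u hu => (hw i).1 u (hzi (Ioo_subset_Icc_self hu))) hzx
  rw [intervalIntegral.integral_const_mul] at hmono_int
  have mono_i1 := hf.2 (i-1) (by omega) (by omega)
  have : d (i-1) z ≤ d (i-1) x := mono_i1 hz hx hzx.le
  nlinarith
lemma d_nonneg (hI : I.OrdConnected) (hIne : ∃ p ∈ I, ∃ q ∈ I, p < q)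
    (hw : IsGauge I w) (hk : 1 ≤ k) (hf : MemF I w k n f d)
    {i : ℕ} (hki : k ≤ i) (hin : i ≤ n) {x : ℝ} (hx : x ∈ I) : 0 ≤ d i x := by
  by_cases hmin : ∃ z ∈ I, z < x
  · obtain ⟨z, hz, hzx⟩ := hmin
    exact d_nonneg_of_lt hI hw hk hf hki hin hz hx hzx
  push_neg at hmin
  obtain ⟨p, hp, q, hq, hpq⟩ := hIne
  have hxq : x < q := lt_of_le_of_lt (hmin p hp) hpq
  have hIocI : Ioc x q ⊆ I := fun y hy => hI.out hx hq ⟨hy.1.le, hy.2⟩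
  by_cases hin' : i = n
  · subst hin'
    have T := hf.1.ld.1 x hx ⟨q, hq, hxq⟩
    have hsub : Ioc x q ⊆ I ∩ Ioi x := fun y hy => ⟨hIocI hy, hy.1⟩
    haveI : (nhdsWithin x (Ioc x q)).NeBot := by
      rw [← mem_closure_iff_nhdsWithin_neBot, closure_Ioc hxq.ne]
      exact ⟨le_rfl, hxq.le⟩
    have T2 : Tendsto (d i) (nhdsWithin x (Ioc x q)) (nhds (d i x)) :=
      T.mono_left (nhdsWithin_mono x hsub)
    refine ge_of_tendsto T2 ?_
    filter_upwards [self_mem_nhdsWithin] with y hy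
    exact d_nonneg_of_lt hI hw hk hf hki hin hx (hIocI hy) hy.1
  · have hilt : i < n := lt_of_le_of_ne hin hin'
    obtain ⟨Cw, hCw⟩ := (hw (i+1)).2.2 (Icc x q) (hI.out hx hq) isCompact_Icc
    have hCw0 : 0 ≤ Cw := le_trans (abs_nonneg _) (hCw x ⟨le_rfl, hxq.le⟩)
    set Bd := max |d (i+1) x| |d (i+1) q| with hBddef
    have hBd0 : 0 ≤ Bd := le_trans (abs_nonneg _) (le_max_left _ _)
    have mono_i1 := hf.2 (i+1) (by omega) (by omega)
    have hBd : ∀ u ∈ Icc x q, |d (i+1) u| ≤ Bd := by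
      intro u hu
      have hu1 : d (i+1) x ≤ d (i+1) u := mono_i1 hx (hI.out hx hq hu) hu.1
      have hu2 : d (i+1) u ≤ d (i+1) q := mono_i1 (hI.out hx hq hu) hq hu.2
      rw [abs_le]
      constructor
      · calc -Bd ≤ -|d (i+1) x| := by simp [hBddef]
          _ ≤ d (i+1) x := neg_abs_le _
          _ ≤ d (i+1) u := hu1
      · calc d (i+1) u ≤ d (i+1) q := hu2
          _ ≤ |d (i+1) q| := le_abs_self _
          _ ≤ Bd := le_max_right _ _
    set C0 := Bd * Cw with hC0def
    have hC00 : 0 ≤ C0 := mul_nonneg hBd0 hCw0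
    have key : ∀ y ∈ Ioc x q, -(C0 * (y - x)) ≤ d i x := by
      intro y hy
      have hyI : y ∈ I := hIocI hy
      have hderiv := hf.1.deriv_eq i hilt x hx y hyI
      have hbound : |∫ u in x..y, d (i+1) u * w (i+1) u| ≤ C0 * |y - x| := by
        have := intervalIntegral.norm_integral_le_of_norm_le_const
          (f := fun u => d (i+1) u * w (i+1) u) (a := x) (b := y) (C := C0) ?_
        · simpa using this
        · intro u hu
          rw [uIoc_of_le hy.1.le] at hu
          have huI : u ∈ Icc x q := ⟨hu.1.le, hu.2.trans hy.2⟩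
          calc ‖d (i+1) u * w (i+1) u‖ = |d (i+1) u| * |w (i+1) u| := abs_mul _ _
            _ ≤ Bd * Cw := mul_le_mul (hBd u huI) (hCw u huI) (abs_nonneg _) hBd0
      have habs : |y - x| = y - x := abs_of_pos (by linarith [hy.1])
      rw [habs] at hbound
      have h1 : d i y = d i x + ∫ u in x..y, d (i+1) u * w (i+1) u := hderiv
      have h2 : 0 ≤ d i y := d_nonneg_of_lt hI hw hk hf hki hin hx hyI hy.1
      have h3 : (∫ u in x..y, d (i+1) u * w (i+1) u) ≤ C0 * (y - x) :=
        le_trans (le_abs_self _) hbound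
      linarith
    by_contra hneg
    push_neg at hneg
    set ε := -d i x with hεdef
    have hε : 0 < ε := by linarith
    set y := min q (x + ε / (2 * C0 + 1)) with hydef
    have hyIoc : y ∈ Ioc x q := by
      constructor
      · apply lt_min hxq
        have : 0 < ε / (2 * C0 + 1) := div_pos hε (by linarith)
        linarith
      · exact min_le_left _ _
    have := key y hyIoc
    have hyx : y - x ≤ ε / (2 * C0 + 1) := by
      have : y ≤ x + ε / (2 * C0 + 1) := min_le_right _ _
      linarith
    have hfrac : C0 * (y - x) ≤ C0 * (ε / (2 * C0 + 1)) :=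
      mul_le_mul_of_nonneg_left hyx hC00
    have hlt : C0 * (ε / (2 * C0 + 1)) < ε := by
      rw [mul_div_assoc']
      rw [div_lt_iff₀ (by linarith)]
      nlinarith
    linarith
end main
section limits
variable {I : Set ℝ} {g : ℝ → ℝ}

lemma tendsto_leftEndFilter (hne : I.Nonempty) (hg : MonotoneOn g I)
    (hbd : BddBelow (g '' I)) :
    Tendsto g (leftEndFilter I) (nhds (sInf (g '' I))) := by
  rw [Metric.tendsto_nhds]
  intro ε hε
  set L := sInf (g '' I) with hL
  obtain ⟨b, hbmem, hblt⟩ := (csInf_lt_iff hbd (hne.image g)).1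
    (lt_add_of_pos_right L hε)
  obtain ⟨c, hc, rfl⟩ := hbmem
  rw [leftEndFilter, eventually_iff]
  refine mem_iInf_of_mem c (mem_iInf_of_mem hc ?_)
  rw [mem_principal]
  rintro x ⟨hxI, hxc⟩
  have h1 : L ≤ g x := csInf_le hbd ⟨x, hxI, rfl⟩
  have h2 : g x ≤ g c := hg hxI hc hxc
  simp only [mem_setOf_eq, Real.dist_eq, abs_lt]
  constructor <;> linarith

lemma cofinal_in_I {x : ℝ} (hx : x ∈ I) {u : ℕ → ℝ}
    (huS : ∀ m, u m ∈ I ∩ Iio x) (hcof : ∀ y ∈ I ∩ Iio x, ∃ m, u m ≤ y) :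
    ∀ y ∈ I, ∃ m, u m ≤ y := by
  intro y hy
  rcases lt_or_ge y x with h | h
  · exact hcof y ⟨hy, h⟩
  · exact ⟨0, (huS 0).2.le.trans h⟩

lemma iInf_seq_eq_sInf_image (hg : MonotoneOn g I) (hg0 : ∀ y ∈ I, 0 ≤ g y)
    {u : ℕ → ℝ} (huI : ∀ m, u m ∈ I) (hcof : ∀ y ∈ I, ∃ m, u m ≤ y) :
    (⨅ m, g (u m)) = sInf (g '' I) := by
  have hbd : BddBelow (g '' I) := ⟨0, by rintro _ ⟨y, hy, rfl⟩; exact hg0 y hy⟩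
  have hbdr : BddBelow (range fun m => g (u m)) :=
    ⟨0, by rintro _ ⟨m, rfl⟩; exact hg0 _ (huI m)⟩
  apply le_antisymm
  · refine le_csInf ⟨g (u 0), ⟨u 0, huI 0, rfl⟩⟩ ?_
    rintro _ ⟨y, hy, rfl⟩
    obtain ⟨m, hm⟩ := hcof y hy
    exact le_trans (ciInf_le hbdr m) (hg (huI m) hy hm)
  · exact le_ciInf fun m => csInf_le hbd ⟨u m, huI m, rfl⟩

lemma tendsto_seq_sInf_image (hg : MonotoneOn g I) (hg0 : ∀ y ∈ I, 0 ≤ g y)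
    {u : ℕ → ℝ} (hua : Antitone u) (huI : ∀ m, u m ∈ I) (hcof : ∀ y ∈ I, ∃ m, u m ≤ y) :
    Tendsto (fun m => g (u m)) atTop (nhds (sInf (g '' I))) := by
  have hbdr : BddBelow (range fun m => g (u m)) :=
    ⟨0, by rintro _ ⟨m, rfl⟩; exact hg0 _ (huI m)⟩
  have ha : Antitone fun m => g (u m) := fun a b hab => hg (huI b) (huI a) (hua hab)
  have := tendsto_atTop_ciInf ha hbdr
  rwa [iInf_seq_eq_sInf_image hg hg0 huI hcof] at this

lemma iSup_ofReal_sub {c L : ℝ} {v : ℕ → ℝ} (hva : Antitone v)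
    (hv : Tendsto v atTop (nhds L)) :
    (⨆ m, ENNReal.ofReal (c - v m)) = ENNReal.ofReal (c - L) := by
  have hmono : Monotone fun m => ENNReal.ofReal (c - v m) := fun a b hab =>
    ENNReal.ofReal_le_ofReal (by have := hva hab; linarith)
  have T1 : Tendsto (fun m => ENNReal.ofReal (c - v m)) atTop
      (nhds (ENNReal.ofReal (c - L))) :=
    (ENNReal.continuous_ofReal.tendsto _).comp (tendsto_const_nhds.sub hv)
  exact tendsto_nhds_unique (tendsto_atTop_iSup hmono) T1
end limits
section main2
variable {I : Set ℝ} {w : ℕ → ℝ → ℝ} {k n : ℕ} {f : ℝ → ℝ} {d : ℕ → ℝ → ℝ}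

lemma lintegral_Ioc_ofReal (hI : I.OrdConnected) (hw : IsGauge I w) (hk : 1 ≤ k)
    (hf : MemF I w k n f d) {j : ℕ} (hkj : k ≤ j) (hjn : j < n)
    {z x : ℝ} (hz : z ∈ I) (hx : x ∈ I) (hzx : z ≤ x) :
    ∫⁻ u in Ioc z x, ENNReal.ofReal (d (j+1) u * w (j+1) u)
      = ENNReal.ofReal (d j x - d j z) := by
  have hint := hf.1.integrable j hjn z hz x hx
  have hIO : IntegrableOn (fun u => d (j+1) u * w (j+1) u) (Ioc z x) volume :=
    (intervalIntegrable_iff_integrableOn_Ioc_of_le hzx).1 hint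
  have hnn : 0 ≤ᵐ[volume.restrict (Ioc z x)] fun u => d (j+1) u * w (j+1) u := by
    refine ae_restrict_of_forall_mem measurableSet_Ioc fun u hu => ?_
    have huI : u ∈ I := hI.out hz hx ⟨hu.1.le, hu.2⟩
    exact mul_nonneg (d_nonneg_of_lt hI hw hk hf (by omega) (by omega) hz huI hu.1)
      ((hw (j+1)).1 u huI).le
  have heq := ofReal_integral_eq_lintegral_ofReal hIO hnn
  rw [← intervalIntegral.integral_of_le hzx] at heq
  have hderiv := hf.1.deriv_eq j hjn z hz x hx
  rw [← heq]
  congr 1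
  linarith

lemma lintegral_Iio_ofReal (hI : I.OrdConnected) (hIne : ∃ p ∈ I, ∃ q ∈ I, p < q)
    (hw : IsGauge I w) (hk : 1 ≤ k)
    (hf : MemF I w k n f d) {j : ℕ} (hkj : k ≤ j) (hjn : j < n)
    {x : ℝ} (hx : x ∈ I) :
    ∫⁻ u in I ∩ Iio x, ENNReal.ofReal (d (j+1) u * w (j+1) u)
      = ENNReal.ofReal (d j x - sInf (d j '' I)) := by
  have mono_j := hf.2 j (by omega) (by omega)
  by_cases hS : (I ∩ Iio x).Nonempty
  · obtain ⟨u, hua, huS, hcof⟩ := exists_cofinal_below _ hS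
    have huI : ∀ m, u m ∈ I := fun m => (huS m).1
    have hux : ∀ m, u m < x := fun m => (huS m).2
    set h : ℝ → ℝ≥0∞ := fun u' => ENNReal.ofReal (d (j+1) u' * w (j+1) u') with hh
    set B := ⋃ m, Ioc (u m) x with hB
    have hBm : MeasurableSet B := MeasurableSet.iUnion fun m => measurableSet_Ioc
    have hBsub : ∀ m, Ioc (u m) x ⊆ I := fun m y hy => hI.out (huI m) hx ⟨hy.1.le, hy.2⟩
    have hae : (I ∩ Iio x : Set ℝ) =ᵐ[volume] B := by
      rw [Filter.eventuallyEq_set]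
      have h1 : B \ (I ∩ Iio x) ⊆ {x} := by
        rintro y ⟨hyB, hyS⟩
        obtain ⟨m, hym⟩ := mem_iUnion.1 hyB
        by_contra hyx
        exact hyS ⟨hBsub m hym, lt_of_le_of_ne hym.2 hyx⟩
      have h2 : (I ∩ Iio x) \ B ⊆ {sInf (I ∩ Iio x)} := by
        rintro y ⟨hyS, hyB⟩
        have hylb : ∀ s ∈ I ∩ Iio x, y ≤ s := by
          intro s hs
          obtain ⟨m, hm⟩ := hcof s hs
          have hyum : y ≤ u m := by
            by_contra hc
            push_neg at hc
            exact hyB (mem_iUnion.2 ⟨m, hc, hyS.2.le⟩)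
          exact hyum.trans hm
        exact (IsLeast.csInf_eq ⟨hyS, hylb⟩).symm
      have hnull : volume ((B \ (I ∩ Iio x)) ∪ ((I ∩ Iio x) \ B)) = 0 := by
        refine measure_mono_null (union_subset_union h1 h2) ?_
        refine le_antisymm (le_trans (measure_union_le _ _) ?_) zero_le
        simp
      refine eventually_of_mem (compl_mem_ae_iff.2 hnull) fun y hy => ?_
      simp only [mem_compl_iff, mem_union, not_or, mem_diff, not_and, not_not] at hy
      exact ⟨hy.2, hy.1⟩
    have hcong : volume.restrict (I ∩ Iio x) = volume.restrict B :=
      Measure.restrict_congr_set hae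
    have haem : ∀ m, AEMeasurable h (volume.restrict (Ioc (u m) x)) := by
      intro m
      have := (intervalIntegrable_iff_integrableOn_Ioc_of_le (hux m).le).1
        (hf.1.integrable j hjn _ (huI m) x hx)
      exact this.aestronglyMeasurable.aemeasurable.ennreal_ofReal
    have haeB : AEMeasurable h (volume.restrict B) := aemeasurable_iUnion_iff.2 haem
    set F : ℕ → ℝ → ℝ≥0∞ := fun m => (Ioc (u m) x).indicator h with hF
    have hmonoset : Monotone fun m => Ioc (u m) x := fun a b hab =>
      Ioc_subset_Ioc_left (hua hab)
    have hFm : ∀ m, AEMeasurable (F m) (volume.restrict B) := by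
      intro m
      refine (aemeasurable_indicator_iff measurableSet_Ioc).2 ?_
      rw [Measure.restrict_restrict measurableSet_Ioc,
        inter_eq_self_of_subset_left (subset_iUnion (fun m => Ioc (u m) x) m)]
      exact haem m
    have hFmono : ∀ y, Monotone fun m => F m y := by
      intro y a b hab
      exact indicator_le_indicator_of_subset (hmonoset hab) (fun _ => zero_le) y
    have hsup : ∀ y, (⨆ m, F m y) = B.indicator h y := by
      intro y
      by_cases hy : y ∈ B
      · obtain ⟨m0, hm0⟩ := mem_iUnion.1 hy
        refine le_antisymm (iSup_le fun m => ?_) ?_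
        · by_cases hym : y ∈ Ioc (u m) x
          · rw [hF]; simp only [indicator_of_mem hym]
            rw [indicator_of_mem hy]
          · rw [hF]; simp only [indicator_of_notMem hym]; exact zero_le
        · rw [indicator_of_mem hy]
          refine le_trans ?_ (le_iSup _ m0)
          rw [hF]; simp [indicator_of_mem hm0]
      · have : ∀ m, y ∉ Ioc (u m) x := fun m hc => hy (mem_iUnion.2 ⟨m, hc⟩)
        simp [hF, indicator_of_notMem, this, indicator_of_notMem hy]
    calc ∫⁻ u' in I ∩ Iio x, h u' = ∫⁻ u' in B, h u' := by rw [hcong]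
      _ = ∫⁻ u' in B, B.indicator h u' := by
          refine setLIntegral_congr_fun hBm (fun y hy => ?_)
          rw [indicator_of_mem hy]
      _ = ∫⁻ u' in B, ⨆ m, F m u' := by
          refine lintegral_congr fun y => ?_
          rw [hsup y]
      _ = ⨆ m, ∫⁻ u' in B, F m u' :=
          lintegral_iSup' hFm (ae_of_all _ hFmono)
      _ = ⨆ m, ∫⁻ u' in Ioc (u m) x, h u' := by
          refine iSup_congr fun m => ?_
          rw [hF]
          rw [lintegral_indicator measurableSet_Ioc,
            Measure.restrict_restrict measurableSet_Ioc,
            inter_eq_self_of_subset_left (subset_iUnion (fun m => Ioc (u m) x) m)]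
      _ = ⨆ m, ENNReal.ofReal (d j x - d j (u m)) := by
          refine iSup_congr fun m => ?_
          exact lintegral_Ioc_ofReal hI hw hk hf hkj hjn (huI m) hx (hux m).le
      _ = ENNReal.ofReal (d j x - sInf (d j '' I)) := by
          refine iSup_ofReal_sub (fun a b hab => mono_j (huI b) (huI a) (hua hab)) ?_
          exact tendsto_seq_sInf_image mono_j
            (fun y hy => d_nonneg hI hIne hw hk hf hkj (by omega) hy) hua huI
            (cofinal_in_I hx huS hcof)
  · rw [not_nonempty_iff_eq_empty] at hS
    rw [hS]
    have hxmin : ∀ y ∈ I, x ≤ y := by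
      intro y hy
      by_contra hc
      push_neg at hc
      exact (not_nonempty_iff_eq_empty.2 hS) ⟨y, hy, hc⟩
    have : sInf (d j '' I) = d j x :=
      IsLeast.csInf_eq ⟨⟨x, hx, rfl⟩, by rintro _ ⟨y, hy, rfl⟩; exact mono_j hx hy (hxmin y hy)⟩
    rw [this]
    simp

lemma measure_I_Iic (hI : I.OrdConnected) (hIne : ∃ p ∈ I, ∃ q ∈ I, p < q)
    (hw : IsGauge I w) (hk : 1 ≤ k) (hkn : k ≤ n)
    (hf : MemF I w k n f d) {μ : Measure ℝ}
    (hμIoc : ∀ x ∈ I, ∀ y ∈ I, x ≤ y → μ (Set.Ioc x y) = ENNReal.ofReal (d n y - d n x))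
    (hμa : ∀ x ∈ I, (∀ y ∈ I, x ≤ y) → μ {x} = 0)
    {x : ℝ} (hx : x ∈ I) :
    μ (I ∩ Iic x) = ENNReal.ofReal (d n x - sInf (d n '' I)) := by
  have mono_n := hf.2 n (by omega) le_rfl
  by_cases hmin : ∃ m0 ∈ I, ∀ y ∈ I, m0 ≤ y
  · obtain ⟨m0, hm0, hm0le⟩ := hmin
    have hm0x : m0 ≤ x := hm0le x hx
    have hIic : I ∩ Iic x = Icc m0 x := by
      ext y
      constructor
      · rintro ⟨hyI, hyx⟩; exact ⟨hm0le y hyI, hyx⟩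
      · intro hy; exact ⟨hI.out hm0 hx hy, hy.2⟩
    rw [hIic]
    have h1 : μ (Icc m0 x) = μ (Ioc m0 x) := by
      refine le_antisymm ?_ (measure_mono Ioc_subset_Icc_self)
      rw [← Ioc_insert_left hm0x, insert_eq]
      refine le_trans (measure_union_le _ _) ?_
      rw [hμa m0 hm0 hm0le, zero_add]
    rw [h1, hμIoc m0 hm0 x hx hm0x]
    have : sInf (d n '' I) = d n m0 :=
      IsLeast.csInf_eq ⟨⟨m0, hm0, rfl⟩, by rintro _ ⟨y, hy, rfl⟩; exact mono_n hm0 hy (hm0le y hy)⟩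
    rw [this]
  · push_neg at hmin
    have hS : (I ∩ Iio x).Nonempty := by
      obtain ⟨z, hz, hzx⟩ := hmin x hx
      exact ⟨z, ⟨hz, hzx⟩⟩
    obtain ⟨u, hua, huS, hcof⟩ := exists_cofinal_below _ hS
    have huI : ∀ m, u m ∈ I := fun m => (huS m).1
    have hux : ∀ m, u m < x := fun m => (huS m).2
    have hBsub : ∀ m, Ioc (u m) x ⊆ I := fun m y hy => hI.out (huI m) hx ⟨hy.1.le, hy.2⟩
    have hcover : I ∩ Iic x = ⋃ m, Ioc (u m) x := by
      ext y
      constructor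
      · rintro ⟨hyI, hyx⟩
        obtain ⟨z, hz, hzy⟩ := hmin y hyI
        have hzS : z ∈ I ∩ Iio x := ⟨hz, lt_of_lt_of_le hzy hyx⟩
        obtain ⟨m, hm⟩ := hcof z hzS
        exact mem_iUnion.2 ⟨m, lt_of_le_of_lt hm hzy, hyx⟩
      · intro hy
        obtain ⟨m, hm⟩ := mem_iUnion.1 hy
        exact ⟨hBsub m hm, hm.2⟩
    rw [hcover]
    have hmonoset : Monotone fun m => Ioc (u m) x := fun a b hab =>
      Ioc_subset_Ioc_left (hua hab)
    rw [hmonoset.directed_le.measure_iUnion]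
    have h2 : ∀ m, μ (Ioc (u m) x) = ENNReal.ofReal (d n x - d n (u m)) := fun m =>
      hμIoc (u m) (huI m) x hx (hux m).le
    simp_rw [h2]
    refine iSup_ofReal_sub (fun a b hab => mono_n (huI b) (huI a) (hua hab)) ?_
    exact tendsto_seq_sInf_image mono_n
      (fun y hy => d_nonneg hI hIne hw hk hf hkn le_rfl hy) hua huI
      (cofinal_in_I hx huS hcof)

lemma sigmaFinite_restrict (hI : I.OrdConnected) (hIne : ∃ p ∈ I, ∃ q ∈ I, p < q)
    {μ : Measure ℝ}
    (hμIoc : ∀ x ∈ I, ∀ y ∈ I, x ≤ y → μ (Set.Ioc x y) = ENNReal.ofReal (d n y - d n x))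
    (hμa : ∀ x ∈ I, (∀ y ∈ I, x ≤ y) → μ {x} = 0) :
    SigmaFinite (μ.restrict I) := by
  have hne : I.Nonempty := by obtain ⟨p, hp, _⟩ := hIne; exact ⟨p, hp⟩
  obtain ⟨u, hua, huI, hucof⟩ := exists_cofinal_below I hne
  obtain ⟨v, hvm, hvI, hvcof⟩ := exists_cofinal_above I hne
  have hsing : ∀ z ∈ I, μ {z} ≠ ⊤ := by
    intro z hz
    by_cases h : ∃ z' ∈ I, z' < z
    · obtain ⟨z', hz', hz'z⟩ := h
      refine ne_top_of_le_ne_top ?_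
        (measure_mono (show ({z} : Set ℝ) ⊆ Ioc z' z from
          singleton_subset_iff.2 ⟨hz'z, le_rfl⟩))
      rw [hμIoc z' hz' z hz hz'z.le]
      exact ENNReal.ofReal_ne_top
    · push_neg at h
      rw [hμa z hz fun y hy => h y hy]
      exact ENNReal.zero_ne_top
  set T : ℕ → Set ℝ := fun m => Icc (u m) (v m) ∪ Iᶜ with hT
  refine ⟨⟨⟨T, fun _ => mem_univ _, ?_, ?_⟩⟩⟩
  · intro m
    rw [Measure.restrict_apply' hI.measurableSet]
    have hsub : T m ∩ I ⊆ Icc (u m) (v m) := by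
      rintro y ⟨hyT, hyI⟩
      rcases hyT with h | h
      · exact h
      · exact absurd hyI h
    refine lt_of_le_of_lt (measure_mono hsub) ?_
    rcases le_or_gt (u m) (v m) with h | h
    · rw [← Ioc_insert_left h, insert_eq]
      refine lt_of_le_of_lt (measure_union_le _ _) ?_
      rw [hμIoc (u m) (huI m) (v m) (hvI m) h]
      exact ENNReal.add_lt_top.2 ⟨lt_top_iff_ne_top.2 (hsing _ (huI m)), ENNReal.ofReal_lt_top⟩
    · rw [Icc_eq_empty (not_le.2 h)]
      simp
  · rw [iUnion_eq_univ_iff]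
    intro y
    by_cases hy : y ∈ I
    · obtain ⟨m1, hm1⟩ := hucof y hy
      obtain ⟨m2, hm2⟩ := hvcof y hy
      refine ⟨max m1 m2, Or.inl ⟨le_trans (hua (le_max_left m1 m2)) hm1,
        le_trans hm2 (hvm (le_max_right m1 m2))⟩⟩
    · exact ⟨0, Or.inr hy⟩
end main2
section pfacts

lemma pfun_self (w : ℕ → ℝ → ℝ) (t : ℝ) (j : ℕ) : pfun w t j j = w j := by
  simp [pfun, pAux]

lemma pE_self (w : ℕ → ℝ → ℝ) (I : Set ℝ) (j : ℕ) :
    pE w I j j = fun x => ENNReal.ofReal (w j x) := by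
  simp [pE, pAuxE]

lemma pfun_succ (w : ℕ → ℝ → ℝ) (t : ℝ) {j n : ℕ} (hjn : j < n) (x : ℝ) :
    pfun w t j n x = w j x * ∫ u in t..x, pfun w t (j+1) n u := by
  have h1 : n - j = (n - (j+1)) + 1 := by omega
  have h2 : n - ((n - (j+1)) + 1) = j := by omega
  rw [pfun, h1]
  show w (n - (n - (j + 1) + 1)) x * (∫ u in t..x, pAux w t n (n - (j+1)) u) = _
  rw [h2]
  rfl

lemma pE_succ (w : ℕ → ℝ → ℝ) (I : Set ℝ) {j n : ℕ} (hjn : j < n) (x : ℝ) :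
    pE w I j n x = ENNReal.ofReal (w j x) * ∫⁻ u in I ∩ Iio x, pE w I (j+1) n u := by
  have h1 : n - j = (n - (j+1)) + 1 := by omega
  have h2 : n - ((n - (j+1)) + 1) = j := by omega
  rw [pE, h1]
  show ENNReal.ofReal (w (n - (n - (j + 1) + 1)) x) * (∫⁻ u in I ∩ Iio x, pAuxE w I n (n - (j+1)) u) = _
  rw [h2]
  rfl

/-- measurability of a parametrized interval integral. -/
lemma measurable_param_intervalIntegral {G : ℝ × ℝ → ℝ} (hG : Measurable G) :
    Measurable fun p : ℝ × ℝ => ∫ s in p.1..p.2, G (p.1, s) := by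
  classical
  have key : ∀ (A : ℝ × ℝ → ℝ) (B : ℝ × ℝ → ℝ), Measurable A → Measurable B →
      Measurable fun p : ℝ × ℝ => ∫ s in Ioc (A p) (B p), G (p.1, s) ∂volume := by
    intro A B hA hB
    have hK : Measurable fun q : (ℝ × ℝ) × ℝ =>
        if A q.1 < q.2 ∧ q.2 ≤ B q.1 then G (q.1.1, q.2) else 0 := by
      refine Measurable.ite ?_ (hG.comp ((measurable_fst.comp measurable_fst).prodMk
        measurable_snd)) measurable_const
      exact MeasurableSet.inter
        (measurableSet_lt (hA.comp measurable_fst) measurable_snd)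
        (measurableSet_le measurable_snd (hB.comp measurable_fst))
    have hSM := (hK.stronglyMeasurable).integral_prod_right'
      (ν := (volume : Measure ℝ))
    have : (fun p : ℝ × ℝ => ∫ s, (if A p < s ∧ s ≤ B p then G (p.1, s) else 0) ∂volume)
        = fun p : ℝ × ℝ => ∫ s in Ioc (A p) (B p), G (p.1, s) ∂volume := by
      funext p
      rw [← MeasureTheory.integral_indicator measurableSet_Ioc]
      congr 1
      funext s
      simp [Set.indicator_apply, mem_Ioc]
    rw [this] at hSM
    exact hSM.measurable
  have h1 := key Prod.fst Prod.snd measurable_fst measurable_snd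
  have h2 := key Prod.snd Prod.fst measurable_snd measurable_fst
  exact h1.sub h2

lemma pAux_joint_measurable {w' : ℕ → ℝ → ℝ} (hw' : ∀ j, Measurable (w' j)) (m : ℕ) :
    ∀ i, Measurable fun p : ℝ × ℝ => pAux w' p.1 m i p.2 := by
  intro i
  induction i with
  | zero => exact (hw' m).comp measurable_snd
  | succ i ih =>
    show Measurable fun p : ℝ × ℝ =>
      w' (m - (i+1)) p.2 * ∫ u in p.1..p.2, pAux w' p.1 m i u
    exact ((hw' _).comp measurable_snd).mul
      (measurable_param_intervalIntegral (G := fun p => pAux w' p.1 m i p.2) ih)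

lemma pplus_joint_measurable {w' : ℕ → ℝ → ℝ} (hw' : ∀ j, Measurable (w' j)) (j m : ℕ) :
    Measurable fun p : ℝ × ℝ => pplus w' p.2 j m p.1 := by
  classical
  show Measurable fun p : ℝ × ℝ => if p.2 ≤ p.1 then pfun w' p.2 j m p.1 else 0
  refine Measurable.ite (measurableSet_le measurable_snd measurable_fst) ?_ measurable_const
  exact (pAux_joint_measurable hw' m (m - j)).comp measurable_swap

section withI
variable {I : Set ℝ} {w : ℕ → ℝ → ℝ}

lemma pAux_wex (hI : I.OrdConnected) (m : ℕ) {t : ℝ} (ht : t ∈ I) :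
    ∀ i, ∀ x ∈ I, pAux w t m i x = pAux (wex w I) t m i x := by
  intro i
  induction i with
  | zero => intro x hx; exact wex_eqOn w m hx
  | succ i ih =>
    intro x hx
    show w (m - (i+1)) x * (∫ u in t..x, pAux w t m i u)
      = wex w I (m - (i+1)) x * ∫ u in t..x, pAux (wex w I) t m i u
    rw [← wex_eqOn w _ hx]
    congr 1
    exact intervalIntegral.integral_congr fun u hu => ih u (hI.uIcc_subset ht hx hu)

lemma pAux_nonneg (hI : I.OrdConnected) (hw : IsGauge I w) (m : ℕ) {t x : ℝ}
    (ht : t ∈ I) (hx : x ∈ I) (htx : t ≤ x) :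
    ∀ i, ∀ s ∈ Icc t x, 0 ≤ pAux w t m i s := by
  intro i
  induction i with
  | zero => exact fun s hs => ((hw m).1 s (hI.out ht hx hs)).le
  | succ i ih =>
    intro s hs
    show 0 ≤ w (m - (i+1)) s * ∫ u in t..s, pAux w t m i u
    refine mul_nonneg ((hw _).1 s (hI.out ht hx hs)).le ?_
    exact intervalIntegral.integral_nonneg hs.1
      (fun u hu => ih u ⟨hu.1, hu.2.trans hs.2⟩)
end withI
end pfacts
section pint
variable {I : Set ℝ} {w : ℕ → ℝ → ℝ}

lemma pAux_intervalIntegrable (hI : I.OrdConnected) (hw : IsGauge I w) (m : ℕ)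
    {t x : ℝ} (ht : t ∈ I) (hx : x ∈ I) (htx : t ≤ x) :
    ∀ i, IntervalIntegrable (pAux w t m i) volume t x := by
  have hIm : MeasurableSet I := hI.measurableSet
  have hIccI : Icc t x ⊆ I := hI.out ht hx
  have key : ∀ i, (∃ C, 0 ≤ C ∧ ∀ s ∈ Icc t x, |pAux w t m i s| ≤ C) ∧
      IntervalIntegrable (pAux w t m i) volume t x := by
    intro i
    induction i with
    | zero =>
      obtain ⟨C, hC⟩ := (hw m).2.2 (Icc t x) hIccI isCompact_Icc
      exact ⟨⟨C, le_trans (abs_nonneg _) (hC t ⟨le_rfl, htx⟩), hC⟩,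
        w_intInt hI hw m ht hx htx⟩
    | succ i ih =>
      obtain ⟨⟨C, hC0, hCb⟩, hCint⟩ := ih
      obtain ⟨Cw, hCw⟩ := (hw (m - (i+1))).2.2 (Icc t x) hIccI isCompact_Icc
      have hCw0 : 0 ≤ Cw := le_trans (abs_nonneg _) (hCw t ⟨le_rfl, htx⟩)
      have hprim : ∀ s ∈ Icc t x, |∫ u in t..s, pAux w t m i u| ≤ C * (x - t) := by
        intro s hs
        have h1 : |∫ u in t..s, pAux w t m i u| ≤ C * |s - t| := by
          have := intervalIntegral.norm_integral_le_of_norm_le_const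
            (f := pAux w t m i) (a := t) (b := s) (C := C) ?_
          · simpa using this
          · intro u hu
            rw [uIoc_of_le hs.1] at hu
            exact (by simpa using hCb u ⟨hu.1.le, hu.2.trans hs.2⟩)
        refine le_trans h1 (mul_le_mul_of_nonneg_left ?_ hC0)
        rw [abs_of_nonneg (by linarith [hs.1])]
        linarith [hs.2]
      have hbound : ∀ s ∈ Icc t x, |pAux w t m (i+1) s| ≤ Cw * (C * (x - t)) := by
        intro s hs
        show |w (m - (i+1)) s * ∫ u in t..s, pAux w t m i u| ≤ _
        rw [abs_mul]
        exact mul_le_mul (hCw s hs) (hprim s hs) (abs_nonneg _) hCw0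
      refine ⟨⟨Cw * (C * (x - t)), mul_nonneg hCw0 (mul_nonneg hC0 (by linarith)), hbound⟩, ?_⟩
      rw [intervalIntegrable_iff_integrableOn_Ioc_of_le htx]
      refine (integrable_const (Cw * (C * (x - t)))).mono' ?_ ?_
      · -- AEStronglyMeasurable of pAux (i+1) on Ioc t x
        have hwm : ∀ j, Measurable (wex w I j) := wex_measurable hIm hw
        have hmeas : Measurable fun s => pAux (wex w I) t m (i+1) s := by
          have := pAux_joint_measurable hwm m (i+1)
          exact this.comp (measurable_const.prodMk measurable_id)
        refine hmeas.aestronglyMeasurable.congr ?_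
        refine ae_restrict_of_forall_mem measurableSet_Ioc fun s hs => ?_
        exact (pAux_wex hI m ht (i+1) s (hIccI ⟨hs.1.le, hs.2⟩)).symm
      · refine ae_restrict_of_forall_mem measurableSet_Ioc fun s hs => ?_
        simpa using hbound s ⟨hs.1.le, hs.2⟩
  exact fun i => (key i).2

lemma pfun_intervalIntegrable (hI : I.OrdConnected) (hw : IsGauge I w) {j n : ℕ}
    {t x : ℝ} (ht : t ∈ I) (hx : x ∈ I) (htx : t ≤ x) :
    IntervalIntegrable (pfun w t j n) volume t x :=
  pAux_intervalIntegrable hI hw n ht hx htx (n - j)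

lemma pfun_nonneg (hI : I.OrdConnected) (hw : IsGauge I w) {j n : ℕ}
    {t x : ℝ} (ht : t ∈ I) (hx : x ∈ I) (htx : t ≤ x) :
    ∀ s ∈ Icc t x, 0 ≤ pfun w t j n s :=
  pAux_nonneg hI hw n ht hx htx (n - j)

lemma pAuxE_aemeasurable (hI : I.OrdConnected) (hw : IsGauge I w) (m : ℕ)
    {S : Set ℝ} (hSm : MeasurableSet S) (hSI : S ⊆ I) :
    ∀ i, AEMeasurable (pAuxE w I m i) (volume.restrict S) := by
  have hIm : MeasurableSet I := hI.measurableSet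
  intro i
  induction i with
  | zero =>
    exact ((w_aesm hIm hw m hSm hSI).aemeasurable).ennreal_ofReal
  | succ i ih =>
    show AEMeasurable
      (fun x => ENNReal.ofReal (w (m - (i+1)) x) * ∫⁻ u in I ∩ Iio x, pAuxE w I m i u) _
    refine AEMeasurable.mul ?_ ?_
    · exact ((w_aesm hIm hw _ hSm hSI).aemeasurable).ennreal_ofReal
    · refine Measurable.aemeasurable ?_
      refine Monotone.measurable fun a b hab => ?_
      exact lintegral_mono_set (inter_subset_inter_right I (Iio_subset_Iio hab))

lemma pE_aemeasurable (hI : I.OrdConnected) (hw : IsGauge I w) (j i : ℕ)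
    {S : Set ℝ} (hSm : MeasurableSet S) (hSI : S ⊆ I) :
    AEMeasurable (pE w I j i) (volume.restrict S) :=
  pAuxE_aemeasurable hI hw i hSm hSI (i - j)
end pint
section taylor
variable {I : Set ℝ} {w : ℕ → ℝ → ℝ} {k n : ℕ} {f : ℝ → ℝ} {d : ℕ → ℝ → ℝ} {μ : Measure ℝ}

lemma taylor_formula (hI : I.OrdConnected) (hIne : ∃ p ∈ I, ∃ q ∈ I, p < q)
    (hw : IsGauge I w) (hk : 1 ≤ k) (hkn : k ≤ n) (hf : MemF I w k n f d)
    (hμIoc : ∀ x ∈ I, ∀ y ∈ I, x ≤ y → μ (Set.Ioc x y) = ENNReal.ofReal (d n y - d n x))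
    (hμa : ∀ x ∈ I, (∀ y ∈ I, x ≤ y) → μ {x} = 0) :
    ∀ m j, j + m = n → k ≤ j → ∀ x ∈ I,
      ENNReal.ofReal (d j x * w j x)
        = (∑ i ∈ Finset.Icc j n, ENNReal.ofReal (sInf (d i '' I)) * pE w I j i x)
          + ∫⁻ t in I, ENNReal.ofReal (pplus w t j n x) ∂μ := by
  have hIm : MeasurableSet I := hI.measurableSet
  intro m
  induction m with
  | zero =>
    intro j hj hkj x hx
    have hjeq : j = n := by omega
    subst hjeq
    have hd0 : ∀ y ∈ I, 0 ≤ d j y := fun y hy => d_nonneg hI hIne hw hk hf hkj le_rfl hy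
    have hbd : BddBelow (d j '' I) := ⟨0, by rintro _ ⟨y, hy, rfl⟩; exact hd0 y hy⟩
    have hL0 : 0 ≤ sInf (d j '' I) :=
      le_csInf ⟨d j x, x, hx, rfl⟩ (by rintro _ ⟨y, hy, rfl⟩; exact hd0 y hy)
    have hLle : sInf (d j '' I) ≤ d j x := csInf_le hbd ⟨x, hx, rfl⟩
    have hwx0 : 0 ≤ w j x := ((hw j).1 x hx).le
    have hrem : (∫⁻ t in I, ENNReal.ofReal (pplus w t j j x) ∂μ)
        = ENNReal.ofReal (w j x) * ENNReal.ofReal (d j x - sInf (d j '' I)) := by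
      have hcong : ∀ t ∈ I, ENNReal.ofReal (pplus w t j j x)
          = (Iic x).indicator (fun _ => ENNReal.ofReal (w j x)) t := by
        intro t _
        by_cases htx : t ≤ x
        · simp [pplus, pfun_self, htx, indicator, mem_Iic]
        · simp [pplus, htx, indicator, mem_Iic]
      rw [setLIntegral_congr_fun hIm hcong,
        lintegral_indicator measurableSet_Iic,
        Measure.restrict_restrict measurableSet_Iic, lintegral_const,
        Measure.restrict_apply_univ, inter_comm,
        measure_I_Iic hI hIne hw hk hkn hf hμIoc hμa hx]
    rw [Finset.Icc_self, Finset.sum_singleton, pE_self, hrem]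
    rw [← ENNReal.ofReal_mul hL0, ← ENNReal.ofReal_mul hwx0,
      ← ENNReal.ofReal_add (mul_nonneg hL0 hwx0) (mul_nonneg hwx0 (by linarith))]
    congr 1
    ring
  | succ m ih =>
    intro j hj hkj x hx
    have hjn : j < n := by omega
    have hj1 : (j+1) + m = n := by omega
    have hwx0 : 0 ≤ w j x := ((hw j).1 x hx).le
    set c : ℝ≥0∞ := ENNReal.ofReal (w j x) with hc
    set A : Set ℝ := I ∩ Iio x with hA
    have hAm : MeasurableSet A := hIm.inter measurableSet_Iio
    have hAI : A ⊆ I := inter_subset_left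
    haveI hSF : SigmaFinite (μ.restrict I) := sigmaFinite_restrict hI hIne hμIoc hμa
    haveI hSF' : SFinite (μ.restrict I) := inferInstance
    have hd0 : ∀ y ∈ I, 0 ≤ d j y := fun y hy =>
      d_nonneg hI hIne hw hk hf hkj (by omega) hy
    have hbdj : BddBelow (d j '' I) := ⟨0, by rintro _ ⟨y, hy, rfl⟩; exact hd0 y hy⟩
    have hL0 : 0 ≤ sInf (d j '' I) :=
      le_csInf ⟨d j x, x, hx, rfl⟩ (by rintro _ ⟨y, hy, rfl⟩; exact hd0 y hy)
    have hLle : sInf (d j '' I) ≤ d j x := csInf_le hbdj ⟨x, hx, rfl⟩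
    have key0 : ∫⁻ u in A, ENNReal.ofReal (d (j+1) u * w (j+1) u)
        = ENNReal.ofReal (d j x - sInf (d j '' I)) :=
      lintegral_Iio_ofReal hI hIne hw hk hf hkj hjn hx
    set S : ℝ → ℝ≥0∞ := fun u =>
      ∑ i ∈ Finset.Icc (j+1) n, ENNReal.ofReal (sInf (d i '' I)) * pE w I (j+1) i u with hS
    set R : ℝ → ℝ≥0∞ := fun u =>
      ∫⁻ t in I, ENNReal.ofReal (pplus w t (j+1) n u) ∂μ with hR
    have hSmeas : AEMeasurable S (volume.restrict A) :=
      Finset.aemeasurable_fun_sum _ fun i _ =>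
        (pE_aemeasurable hI hw (j+1) i hAm hAI).const_mul _
    have hIH : ∫⁻ u in A, ENNReal.ofReal (d (j+1) u * w (j+1) u)
        = (∫⁻ u in A, S u) + ∫⁻ u in A, R u := by
      rw [setLIntegral_congr_fun hAm
        (fun u hu => ih (j+1) hj1 (by omega) u hu.1)]
      exact lintegral_add_left' hSmeas R
    have hsum : ∫⁻ u in A, S u = ∑ i ∈ Finset.Icc (j+1) n,
        ENNReal.ofReal (sInf (d i '' I)) * ∫⁻ u in A, pE w I (j+1) i u := by
      rw [hS, lintegral_finset_sum' _ (fun i _ =>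
        (pE_aemeasurable hI hw (j+1) i hAm hAI).const_mul _)]
      exact Finset.sum_congr rfl fun i _ => lintegral_const_mul' _ _ ENNReal.ofReal_ne_top
    have hg' : Measurable fun p : ℝ × ℝ =>
        ENNReal.ofReal (pplus (wex w I) p.2 (j+1) n p.1) :=
      ENNReal.measurable_ofReal.comp (pplus_joint_measurable (wex_measurable hIm hw) (j+1) n)
    have hnull : ((volume.restrict A).prod (μ.restrict I)) ((A ×ˢ I)ᶜ) = 0 := by
      rw [Measure.prod_apply (hAm.prod hIm).compl]
      have hz : ∀ᵐ u ∂(volume.restrict A), (μ.restrict I) (Prod.mk u ⁻¹' (A ×ˢ I)ᶜ) = 0 := by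
        filter_upwards [ae_restrict_mem hAm] with u hu
        have hpre : Prod.mk u ⁻¹' (A ×ˢ I)ᶜ = Iᶜ := by
          ext t
          simp [hu]
        rw [hpre, Measure.restrict_apply hIm.compl]
        simp
      rw [lintegral_congr_ae hz]
      simp
    have hae : (fun p : ℝ × ℝ => ENNReal.ofReal (pplus (wex w I) p.2 (j+1) n p.1))
        =ᵐ[(volume.restrict A).prod (μ.restrict I)]
        (Function.uncurry fun u t => ENNReal.ofReal (pplus w t (j+1) n u)) := by
      refine eventually_of_mem ((mem_ae_iff).2 hnull) fun p hp => ?_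
      rw [mem_prod] at hp
      simp only [Function.uncurry]
      congr 1
      simp only [pplus, pfun]
      by_cases h : p.2 ≤ p.1
      · simp only [if_pos h]
        exact (pAux_wex hI n hp.2 (n - (j+1)) p.1 (hAI hp.1)).symm
      · simp [h]
    have huncur : AEMeasurable (Function.uncurry fun u t =>
        ENNReal.ofReal (pplus w t (j+1) n u)) ((volume.restrict A).prod (μ.restrict I)) :=
      (hg'.aemeasurable).congr hae
    have hswap : ∫⁻ u in A, R u
        = ∫⁻ t in I, ∫⁻ u in A, ENNReal.ofReal (pplus w t (j+1) n u) ∂volume ∂μ :=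
      lintegral_lintegral_swap huncur
    have hinner : ∀ t ∈ I, c * ∫⁻ u in A, ENNReal.ofReal (pplus w t (j+1) n u)
        = ENNReal.ofReal (pplus w t j n x) := by
      intro t ht
      by_cases htx : t ≤ x
      · have hcong2 : ∀ u ∈ A, ENNReal.ofReal (pplus w t (j+1) n u)
            = (Ici t).indicator (fun u => ENNReal.ofReal (pfun w t (j+1) n u)) u := by
          intro u _
          by_cases h : t ≤ u
          · simp [pplus, h, indicator, mem_Ici]
          · simp [pplus, h, indicator, mem_Ici]
        rw [setLIntegral_congr_fun hAm hcong2,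
          lintegral_indicator measurableSet_Ici,
          Measure.restrict_restrict measurableSet_Ici]
        have hset : Ici t ∩ A = Ico t x := by
          ext u
          constructor
          · rintro ⟨h1, _, h3⟩; exact ⟨h1, h3⟩
          · intro hu; exact ⟨hu.1, hI.out ht hx ⟨hu.1, hu.2.le⟩, hu.2⟩
        rw [hset, Measure.restrict_congr_set Ico_ae_eq_Ioc]
        have hint : IntegrableOn (pfun w t (j+1) n) (Ioc t x) volume :=
          (intervalIntegrable_iff_integrableOn_Ioc_of_le htx).1
            (pfun_intervalIntegrable hI hw ht hx htx)
        have hnn : 0 ≤ᵐ[volume.restrict (Ioc t x)] pfun w t (j+1) n :=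
          ae_restrict_of_forall_mem measurableSet_Ioc fun u hu =>
            pfun_nonneg hI hw ht hx htx u ⟨hu.1.le, hu.2⟩
        rw [← ofReal_integral_eq_lintegral_ofReal hint hnn,
          ← intervalIntegral.integral_of_le htx, hc, ← ENNReal.ofReal_mul hwx0,
          ← pfun_succ w t hjn x]
        simp [pplus, htx]
      · have hzero : ∀ u ∈ A, ENNReal.ofReal (pplus w t (j+1) n u) = 0 := by
          intro u hu
          have h2 : ¬ t ≤ u := by
            push_neg at htx ⊢
            exact hu.2.trans htx
          simp [pplus, h2]
        rw [setLIntegral_congr_fun hAm hzero]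
        simp [pplus, htx]
    have hjj : pE w I j j x = ENNReal.ofReal (w j x) := by rw [pE_self]
    calc ENNReal.ofReal (d j x * w j x)
        = c * ENNReal.ofReal (d j x) := by
          rw [mul_comm (d j x) (w j x), hc, ENNReal.ofReal_mul hwx0]
      _ = c * (ENNReal.ofReal (sInf (d j '' I))
            + ENNReal.ofReal (d j x - sInf (d j '' I))) := by
          rw [← ENNReal.ofReal_add hL0 (by linarith)]
          congr 2
          ring
      _ = c * ENNReal.ofReal (sInf (d j '' I))
            + c * ((∫⁻ u in A, S u) + ∫⁻ u in A, R u) := by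
          rw [← hIH, key0, mul_add]
      _ = ENNReal.ofReal (sInf (d j '' I)) * pE w I j j x
            + ((∑ i ∈ Finset.Icc (j+1) n, ENNReal.ofReal (sInf (d i '' I)) * pE w I j i x)
              + ∫⁻ t in I, ENNReal.ofReal (pplus w t j n x) ∂μ) := by
          have h1 : c * ∫⁻ u in A, S u
              = ∑ i ∈ Finset.Icc (j+1) n, ENNReal.ofReal (sInf (d i '' I)) * pE w I j i x := by
            rw [hsum, Finset.mul_sum]
            refine Finset.sum_congr rfl fun i hi => ?_
            have hji : j < i := by have := (Finset.mem_Icc.1 hi).1; omega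
            rw [pE_succ w I hji x]
            ring
          have h2 : c * ∫⁻ u in A, R u
              = ∫⁻ t in I, ENNReal.ofReal (pplus w t j n x) ∂μ := by
            rw [hswap, ← lintegral_const_mul' c _ (by rw [hc]; exact ENNReal.ofReal_ne_top)]
            exact setLIntegral_congr_fun hIm (fun t ht => hinner t ht)
          rw [mul_add, h1, h2, hjj]
          ring
      _ = (∑ i ∈ Finset.Icc j n, ENNReal.ofReal (sInf (d i '' I)) * pE w I j i x)
            + ∫⁻ t in I, ENNReal.ofReal (pplus w t j n x) ∂μ := by
          rw [Finset.Icc_eq_cons_Ioc (by omega : j ≤ n), Finset.sum_cons,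
            ← Finset.Icc_add_one_left_eq_Ioc]
          ring
end taylor

/-- Lemma `taylor-k`: the generalized Taylor expansion at the left
endpoint `a` of `I` of the generalized derivatives `f^{(j)}`, `j ∈ {k, …, n}`, of
`f ∈ F_+^{k:n}(I)`; here `L i = f^{(i)}(a+)` and `μ` is the Lebesgue–Stieltjes measure of
`f^{(n)} = d n` on `I`. -/
theorem stmt_10 (I : Set ℝ) (hI : I.OrdConnected) (hIne : ∃ p ∈ I, ∃ q ∈ I, p < q)
    (w : ℕ → ℝ → ℝ) (hw : IsGauge I w)
    (k n : ℕ) (hk : 1 ≤ k) (hkn : k ≤ n)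
    (f : ℝ → ℝ) (d : ℕ → ℝ → ℝ) (hf : MemF I w k n f d)
    (μ : Measure ℝ)
    (hμIoc : ∀ x ∈ I, ∀ y ∈ I, x ≤ y → μ (Set.Ioc x y) = ENNReal.ofReal (d n y - d n x))
    (hμa : ∀ x ∈ I, (∀ y ∈ I, x ≤ y) → μ {x} = 0) :
    ∃ L : ℕ → ℝ,
      (∀ i, k ≤ i → i ≤ n →
        0 ≤ L i ∧ Tendsto (d i) (leftEndFilter I) (nhds (L i))) ∧
      (∀ j i, k ≤ j → j ≤ i → i ≤ n → (∀ x ∈ I, pE w I j i x = ⊤) → L i = 0) ∧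
      (∀ j, k ≤ j → j ≤ n → ∀ x ∈ I,
        ENNReal.ofReal (d j x * w j x)
          = (∑ i ∈ Finset.Icc j n, ENNReal.ofReal (L i) * pE w I j i x)
            + ∫⁻ t in I, ENNReal.ofReal (pplus w t j n x) ∂μ) := by
  have hne : I.Nonempty := by obtain ⟨p, hp, _⟩ := hIne; exact ⟨p, hp⟩
  obtain ⟨x0, hx0⟩ := hne
  refine ⟨fun i => sInf (d i '' I), ?_, ?_, ?_⟩
  · intro i hki hin
    have hd0 : ∀ y ∈ I, 0 ≤ d i y := fun y hy => d_nonneg hI hIne hw hk hf hki hin hy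
    have hbd : BddBelow (d i '' I) := ⟨0, by rintro _ ⟨y, hy, rfl⟩; exact hd0 y hy⟩
    constructor
    · exact le_csInf ⟨d i x0, x0, hx0, rfl⟩ (by rintro _ ⟨y, hy, rfl⟩; exact hd0 y hy)
    · exact tendsto_leftEndFilter ⟨x0, hx0⟩ (hf.2 i (by omega) hin) hbd
  · intro j i hkj hji hin htop
    have hki : k ≤ i := hkj.trans hji
    have hd0 : ∀ y ∈ I, 0 ≤ d i y := fun y hy => d_nonneg hI hIne hw hk hf hki hin hy
    have hL0 : 0 ≤ sInf (d i '' I) :=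
      le_csInf ⟨d i x0, x0, hx0, rfl⟩ (by rintro _ ⟨y, hy, rfl⟩; exact hd0 y hy)
    have heq := taylor_formula hI hIne hw hk hkn hf hμIoc hμa (n - j) j (by omega) hkj x0 hx0
    have hlt : (∑ i' ∈ Finset.Icc j n, ENNReal.ofReal (sInf (d i' '' I)) * pE w I j i' x0)
        + (∫⁻ t in I, ENNReal.ofReal (pplus w t j n x0) ∂μ) < ⊤ := by
      rw [← heq]
      exact ENNReal.ofReal_lt_top
    have hterm : ENNReal.ofReal (sInf (d i '' I)) * pE w I j i x0
        ≤ (∑ i' ∈ Finset.Icc j n, ENNReal.ofReal (sInf (d i' '' I)) * pE w I j i' x0) :=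
      Finset.single_le_sum (f := fun i' => ENNReal.ofReal (sInf (d i' '' I)) * pE w I j i' x0)
        (fun _ _ => zero_le) (Finset.mem_Icc.2 ⟨hji, hin⟩)
    have hterm2 : ENNReal.ofReal (sInf (d i '' I)) * pE w I j i x0 < ⊤ :=
      lt_of_le_of_lt (hterm.trans le_self_add) hlt
    rw [htop x0 hx0] at hterm2
    by_contra hne0
    have h0 : ENNReal.ofReal (sInf (d i '' I)) ≠ 0 := by
      rw [Ne, ENNReal.ofReal_eq_zero]
      push_neg
      exact lt_of_le_of_ne hL0 (Ne.symm hne0)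
    rw [ENNReal.mul_top h0] at hterm2
    exact lt_irrefl _ hterm2
  · intro j hkj hjn x hx
    exact taylor_formula hI hIne hw hk hkn hf hμIoc hμa (n - j) j (by omega) hkj x hx

end
end

section
/- Assume 1 ≤ k ≤ n, and let G be any set of functions with P_+^{k:n} ∪ P^+_{0:n} ⊆ G ⊆ F_+^{k:n}(I). Then for every nonnegative Borel measure ν on I: [ν(f) > −∞ for all f ∈ G] if and only if [ν(p) > −∞ for all p ∈ P_+^{≤k}]. -/
open MeasureTheory Set Filter
open scoped ENNReal

noncomputable section

section Helpers

variable {I : Set ℝ} {w : ℕ → ℝ → ℝ}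

open Classical in
/-- extension of `w j` by zero off `I`. -/
noncomputable def wExt (I : Set ℝ) (w : ℕ → ℝ → ℝ) (j : ℕ) : ℝ → ℝ :=
  fun x => if hx : x ∈ I then w j x else 0

lemma wExt_eqOn (j : ℕ) : EqOn (wExt I w j) (w j) I := by
  intro x hx
  simp only [wExt, dif_pos hx]

lemma wExt_measurable (hI : I.OrdConnected) (hw : IsGauge I w) (j : ℕ) :
    Measurable (wExt I w j) := by
  classical
  exact Measurable.dite (f := fun x : I => w j x) (g := fun _ => (0:ℝ)) (hw j).2.1
    measurable_const hI.measurableSet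

lemma intervalIntegrable_mul_w (hI : I.OrdConnected) (hw : IsGauge I w)
    {z x : ℝ} (hz : z ∈ I) (hx : x ∈ I) {g : ℝ → ℝ}
    (hg : ContinuousOn g (uIcc z x)) (j : ℕ) :
    IntervalIntegrable (fun u => g u * w j u) volume z x := by
  have hsub : uIcc z x ⊆ I := hI.uIcc_subset hz hx
  obtain ⟨Cg, hCg⟩ := isCompact_uIcc.exists_bound_of_continuousOn hg
  obtain ⟨Cw, hCw⟩ := (hw j).2.2 (uIcc z x) hsub isCompact_uIcc
  rw [intervalIntegrable_iff]
  have hmeas : MeasurableSet (uIoc z x) := measurableSet_uIoc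
  have hIoc : uIoc z x ⊆ uIcc z x := Set.uIoc_subset_uIcc
  have hmain : IntegrableOn (fun u => g u * wExt I w j u) (uIoc z x) volume := by
    refine Integrable.mono' (g := fun _ => Cg * Cw)
      (integrableOn_const ?_) ?_ ?_
    · rw [Set.uIoc]; exact measure_Ioc_lt_top.ne
    · exact (((hg.mono hIoc).aestronglyMeasurable hmeas).mul
        ((wExt_measurable hI hw j).aestronglyMeasurable.restrict))
    · refine ae_restrict_of_forall_mem hmeas fun u hu => ?_
      have hu' : u ∈ uIcc z x := hIoc hu
      have h1 : ‖g u‖ ≤ Cg := hCg u hu'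
      have h2 : |wExt I w j u| ≤ Cw := by
        rw [wExt_eqOn j (hsub hu')]; exact hCw u hu'
      calc ‖g u * wExt I w j u‖ = ‖g u‖ * |wExt I w j u| := by
            rw [norm_mul]; rfl
        _ ≤ Cg * Cw := by
            exact mul_le_mul h1 h2 (abs_nonneg _) ((norm_nonneg _).trans h1)
  exact hmain.congr_fun (fun u hu => by
    beta_reduce; rw [wExt_eqOn j (hsub (hIoc hu))]) hmeas

lemma intervalIntegrable_w (hI : I.OrdConnected) (hw : IsGauge I w)
    {z x : ℝ} (hz : z ∈ I) (hx : x ∈ I) (j : ℕ) :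
    IntervalIntegrable (w j) volume z x := by
  have := intervalIntegrable_mul_w hI hw hz hx (g := fun _ => (1:ℝ)) continuousOn_const j
  simpa using this

end Helpers
section Poly

variable {I : Set ℝ} {w : ℕ → ℝ → ℝ}

noncomputable def eA (w : ℕ → ℝ → ℝ) (t : ℝ) (a : ℕ → ℝ) (k : ℕ) (c : ℝ) : ℕ → ℝ → ℝ
  | 0 => fun _ => c
  | (m+1) => fun x => a (k - (m+1)) + ∫ u in t..x, eA w t a k c m u * w (k - m) u

/-- The derivative system of the generalized polynomial with Taylor data `a` at `t`,
top coefficient `c`, degree `k`. -/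
noncomputable def eD (w : ℕ → ℝ → ℝ) (t : ℝ) (a : ℕ → ℝ) (k : ℕ) (c : ℝ) (j : ℕ) : ℝ → ℝ :=
  eA w t a k c (k - j)

lemma eA_contOn (hI : I.OrdConnected) (hw : IsGauge I w) {t : ℝ} (ht : t ∈ I)
    (a : ℕ → ℝ) (k : ℕ) (c : ℝ) :
    ∀ m, ∀ {z x : ℝ}, z ∈ I → x ∈ I → ContinuousOn (eA w t a k c m) (uIcc z x) := by
  intro m
  induction m with
  | zero => exact fun _ _ => continuousOn_const
  | succ m ih =>
    intro z x hz hx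
    set b₁ := min t (min z x) with hb₁def
    set b₂ := max t (max z x) with hb₂def
    have hb₁ : b₁ ∈ I := by
      rcases min_cases t (min z x) with ⟨h, _⟩ | ⟨h, _⟩
      · rw [hb₁def, h]; exact ht
      · rw [hb₁def, h]
        rcases min_cases z x with ⟨h2, _⟩ | ⟨h2, _⟩
        · rw [h2]; exact hz
        · rw [h2]; exact hx
    have hb₂ : b₂ ∈ I := by
      rcases max_cases t (max z x) with ⟨h, _⟩ | ⟨h, _⟩
      · rw [hb₂def, h]; exact ht
      · rw [hb₂def, h]
        rcases max_cases z x with ⟨h2, _⟩ | ⟨h2, _⟩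
        · rw [h2]; exact hz
        · rw [h2]; exact hx
    have ht' : t ∈ uIcc b₁ b₂ := by
      rw [Set.mem_uIcc]
      exact Or.inl ⟨min_le_left _ _, le_max_left _ _⟩
    have hint : IntervalIntegrable (fun u => eA w t a k c m u * w (k - m) u) volume b₁ b₂ :=
      intervalIntegrable_mul_w hI hw hb₁ hb₂ (ih hb₁ hb₂) _
    have hcont := intervalIntegral.continuousOn_primitive_interval' hint ht'
    have hsubz : z ∈ uIcc b₁ b₂ := by
      rw [Set.mem_uIcc]
      exact Or.inl ⟨(min_le_right t _).trans (min_le_left z x),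
        (le_max_left z x).trans (le_max_right t _)⟩
    have hsubx : x ∈ uIcc b₁ b₂ := by
      rw [Set.mem_uIcc]
      exact Or.inl ⟨(min_le_right t _).trans (min_le_right z x),
        (le_max_right z x).trans (le_max_right t _)⟩
    have hsub : uIcc z x ⊆ uIcc b₁ b₂ := uIcc_subset_uIcc hsubz hsubx
    have heq : eA w t a k c (m+1)
        = fun y => a (k - (m+1)) + ∫ u in t..y, eA w t a k c m u * w (k - m) u := rfl
    rw [heq]
    exact continuousOn_const.add (hcont.mono hsub)

lemma eD_intervalIntegrable (hI : I.OrdConnected) (hw : IsGauge I w) {t : ℝ} (ht : t ∈ I)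
    (a : ℕ → ℝ) (k : ℕ) (c : ℝ) (j j' : ℕ) {z x : ℝ} (hz : z ∈ I) (hx : x ∈ I) :
    IntervalIntegrable (fun u => eD w t a k c j u * w j' u) volume z x :=
  intervalIntegrable_mul_w hI hw hz hx (eA_contOn hI hw ht a k c (k - j) hz hx) j'

lemma eD_top (w : ℕ → ℝ → ℝ) (t : ℝ) (a : ℕ → ℝ) (k : ℕ) (c : ℝ) (y : ℝ) :
    eD w t a k c k y = c := by
  simp [eD, Nat.sub_self, eA]

lemma eD_succ (w : ℕ → ℝ → ℝ) (t : ℝ) (a : ℕ → ℝ) {k : ℕ} (c : ℝ) {j : ℕ} (hj : j < k)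
    (y : ℝ) :
    eD w t a k c j y = a j + ∫ u in t..y, eD w t a k c (j+1) u * w (j+1) u := by
  have h1 : k - j = (k - (j+1)) + 1 := by omega
  have h2 : k - (k - (j+1) + 1) = j := by omega
  have h3 : k - (k - (j+1)) = j + 1 := by omega
  calc eD w t a k c j y = eA w t a k c ((k - (j+1)) + 1) y := by rw [eD, h1]
    _ = a (k - (k - (j+1) + 1)) + ∫ u in t..y, eA w t a k c (k - (j+1)) u * w (k - (k - (j+1))) u := rfl
    _ = a j + ∫ u in t..y, eD w t a k c (j+1) u * w (j+1) u := by rw [h2, h3]; rfl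

end Poly
section Compare

variable {I : Set ℝ} {w : ℕ → ℝ → ℝ} {k n : ℕ} {f : ℝ → ℝ} {d : ℕ → ℝ → ℝ}

lemma dk_nonneg (hI : I.OrdConnected) (hw : IsGauge I w)
    (hk : 1 ≤ k) (hkn : k ≤ n) (hf : MemF I w k n f d)
    {p q : ℝ} (hp : p ∈ I) (hq : q ∈ I) (hpq : p < q) : 0 ≤ d k q := by
  by_contra hneg
  push_neg at hneg
  have hkk : k - 1 + 1 = k := Nat.sub_add_cancel hk
  have hIcc : Icc p q ⊆ I := hI.out hp hq
  have h1 := hf.1.deriv_eq (k-1) (by omega) p hp q hq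
  rw [hkk] at h1
  have hmon : d (k-1) p ≤ d (k-1) q := hf.2 (k-1) le_rfl (by omega) hp hq hpq.le
  have hintd : IntervalIntegrable (fun u => d k u * w k u) volume p q := by
    have := hf.1.integrable (k-1) (by omega) p hp q hq
    rwa [hkk] at this
  have hintc : IntervalIntegrable (fun u => d k q * w k u) volume p q :=
    intervalIntegrable_mul_w hI hw hp hq continuousOn_const k
  have hmono_int : ∫ u in p..q, d k u * w k u ≤ ∫ u in p..q, d k q * w k u :=
    intervalIntegral.integral_mono_on hpq.le hintd hintc
      (fun u hu => mul_le_mul_of_nonneg_right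
        (hf.2 k (by omega) hkn (hIcc hu) hq hu.2) ((hw k).1 u (hIcc hu)).le)
  have hposW : 0 < ∫ u in p..q, w k u :=
    intervalIntegral.intervalIntegral_pos_of_pos_on
      (intervalIntegrable_w hI hw hp hq k)
      (fun u hu => (hw k).1 u (hIcc (Ioo_subset_Icc_self hu))) hpq
  have hconst : ∫ u in p..q, d k q * w k u = d k q * ∫ u in p..q, w k u :=
    intervalIntegral.integral_const_mul _ _
  nlinarith

end Compare
section Compare2

variable {I : Set ℝ} {w : ℕ → ℝ → ℝ} {k n : ℕ} {f : ℝ → ℝ} {d : ℕ → ℝ → ℝ}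

lemma compare_right (hI : I.OrdConnected) (hw : IsGauge I w)
    (hk : 1 ≤ k) (hkn : k ≤ n) (hf : MemF I w k n f d)
    {t : ℝ} (ht : t ∈ I) {c : ℝ}
    (hcle : ∀ u ∈ I, t ≤ u → c ≤ d k u) :
    ∀ i, ∀ x ∈ I, t ≤ x →
      eD w t (fun j' => d j' t) k c (k-1-i) x ≤ d (k-1-i) x := by
  intro i
  induction i with
  | zero =>
    intro x hx htx
    simp only [Nat.sub_zero]
    have hkk : k - 1 + 1 = k := Nat.sub_add_cancel hk
    have hE : eD w t (fun j' => d j' t) k c (k-1) x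
        = d (k-1) t + ∫ u in t..x, eD w t (fun j' => d j' t) k c (k-1+1) u * w (k-1+1) u :=
      eD_succ w t _ c (by omega) x
    rw [hkk] at hE
    simp only [eD_top] at hE
    have hd := hf.1.deriv_eq (k-1) (by omega) t ht x hx
    rw [hkk] at hd
    have hIcc : Icc t x ⊆ I := hI.out ht hx
    have hintc : IntervalIntegrable (fun u => c * w k u) volume t x :=
      intervalIntegrable_mul_w hI hw ht hx continuousOn_const k
    have hintd : IntervalIntegrable (fun u => d k u * w k u) volume t x := by
      have := hf.1.integrable (k-1) (by omega) t ht x hx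
      rwa [hkk] at this
    have hcmp : ∫ u in t..x, c * w k u ≤ ∫ u in t..x, d k u * w k u :=
      intervalIntegral.integral_mono_on htx hintc hintd fun u hu =>
        mul_le_mul_of_nonneg_right (hcle u (hIcc hu) hu.1) ((hw k).1 u (hIcc hu)).le
    linarith
  | succ i ih =>
    by_cases hstop : k-1-(i+1) = k-1-i
    · rw [hstop]; exact ih
    · intro x hx htx
      have hj1 : (k-1-(i+1)) + 1 = k-1-i := by omega
      have hjk : k-1-(i+1) < k := by omega
      set j := k-1-(i+1) with hjdef
      have hE : eD w t (fun j' => d j' t) k c j x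
          = d j t + ∫ u in t..x, eD w t (fun j' => d j' t) k c (j+1) u * w (j+1) u :=
        eD_succ w t _ c hjk x
      have hd := hf.1.deriv_eq j (by omega) t ht x hx
      have hIcc : Icc t x ⊆ I := hI.out ht hx
      have hintE : IntervalIntegrable
          (fun u => eD w t (fun j' => d j' t) k c (j+1) u * w (j+1) u) volume t x :=
        eD_intervalIntegrable hI hw ht _ k c (j+1) (j+1) ht hx
      have hintd : IntervalIntegrable (fun u => d (j+1) u * w (j+1) u) volume t x :=
        hf.1.integrable j (by omega) t ht x hx
      have hcmp : ∫ u in t..x, eD w t (fun j' => d j' t) k c (j+1) u * w (j+1) u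
          ≤ ∫ u in t..x, d (j+1) u * w (j+1) u := by
        refine intervalIntegral.integral_mono_on htx hintE hintd fun u hu => ?_
        have := ih u (hIcc hu) hu.1
        rw [← hj1] at this
        exact mul_le_mul_of_nonneg_right this ((hw (j+1)).1 u (hIcc hu)).le
      linarith

end Compare2
section Compare3

variable {I : Set ℝ} {w : ℕ → ℝ → ℝ} {k n : ℕ} {f : ℝ → ℝ} {d : ℕ → ℝ → ℝ}

lemma compare_left (hI : I.OrdConnected) (hw : IsGauge I w)
    (hk : 1 ≤ k) (hkn : k ≤ n) (hf : MemF I w k n f d)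
    {t : ℝ} (ht : t ∈ I) {c : ℝ}
    (hcE : Even k → c = 0) (hcO : ¬Even k → c = d k t) :
    ∀ i, ∀ x ∈ I, x ≤ t →
      (Even (k-1-i) → eD w t (fun j' => d j' t) k c (k-1-i) x ≤ d (k-1-i) x) ∧
      (¬Even (k-1-i) → d (k-1-i) x ≤ eD w t (fun j' => d j' t) k c (k-1-i) x) := by
  intro i
  induction i with
  | zero =>
    intro x hx hxt
    simp only [Nat.sub_zero]
    have hkk : k - 1 + 1 = k := Nat.sub_add_cancel hk
    have hE : eD w t (fun j' => d j' t) k c (k-1) x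
        = d (k-1) t + ∫ u in t..x, eD w t (fun j' => d j' t) k c (k-1+1) u * w (k-1+1) u :=
      eD_succ w t _ c (by omega) x
    rw [hkk] at hE
    simp only [eD_top] at hE
    have hd := hf.1.deriv_eq (k-1) (by omega) t ht x hx
    rw [hkk] at hd
    have hIcc : Icc x t ⊆ I := hI.out hx ht
    by_cases hpar : Even k
    · constructor
      · intro hev
        exfalso
        rw [Nat.even_iff] at hev hpar
        omega
      · intro _
        rw [hcE hpar] at hE ⊢
        simp only [zero_mul, intervalIntegral.integral_zero, add_zero] at hE
        rw [hE]
        exact hf.2 (k-1) le_rfl (by omega) hx ht hxt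
    · constructor
      · intro _
        have hintc : IntervalIntegrable (fun u => c * w k u) volume x t :=
          intervalIntegrable_mul_w hI hw hx ht continuousOn_const k
        have hintd : IntervalIntegrable (fun u => d k u * w k u) volume x t := by
          have := hf.1.integrable (k-1) (by omega) x hx t ht
          rwa [hkk] at this
        have hcmp : ∫ u in x..t, d k u * w k u ≤ ∫ u in x..t, c * w k u := by
          refine intervalIntegral.integral_mono_on hxt hintd hintc fun u hu => ?_
          have hdku : d k u ≤ d k t := hf.2 k (by omega) hkn (hIcc hu) ht hu.2
          rw [hcO hpar]
          exact mul_le_mul_of_nonneg_right hdku ((hw k).1 u (hIcc hu)).le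
        have hs1 : ∫ u in t..x, c * w k u = -∫ u in x..t, c * w k u :=
          intervalIntegral.integral_symm x t
        have hs2 : ∫ u in t..x, d k u * w k u = -∫ u in x..t, d k u * w k u :=
          intervalIntegral.integral_symm x t
        rw [hs1] at hE; rw [hs2] at hd
        linarith
      · intro hodd
        exfalso
        rw [Nat.even_iff] at hodd hpar
        omega
  | succ i ih =>
    by_cases hstop : k-1-(i+1) = k-1-i
    · rw [hstop]; exact ih
    · intro x hx hxt
      have hj1 : (k-1-(i+1)) + 1 = k-1-i := by omega
      have hjk : k-1-(i+1) < k := by omega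
      set j := k-1-(i+1) with hjdef
      have hE : eD w t (fun j' => d j' t) k c j x
          = d j t + ∫ u in t..x, eD w t (fun j' => d j' t) k c (j+1) u * w (j+1) u :=
        eD_succ w t _ c hjk x
      have hd := hf.1.deriv_eq j (by omega) t ht x hx
      have hIcc : Icc x t ⊆ I := hI.out hx ht
      have hintE : IntervalIntegrable
          (fun u => eD w t (fun j' => d j' t) k c (j+1) u * w (j+1) u) volume x t :=
        eD_intervalIntegrable hI hw ht _ k c (j+1) (j+1) hx ht
      have hintd : IntervalIntegrable (fun u => d (j+1) u * w (j+1) u) volume x t :=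
        hf.1.integrable j (by omega) x hx t ht
      have hs1 : ∫ u in t..x, eD w t (fun j' => d j' t) k c (j+1) u * w (j+1) u
          = -∫ u in x..t, eD w t (fun j' => d j' t) k c (j+1) u * w (j+1) u :=
        intervalIntegral.integral_symm x t
      have hs2 : ∫ u in t..x, d (j+1) u * w (j+1) u
          = -∫ u in x..t, d (j+1) u * w (j+1) u :=
        intervalIntegral.integral_symm x t
      rw [hs1] at hE; rw [hs2] at hd
      constructor
      · intro hev
        have hcmp : ∫ u in x..t, d (j+1) u * w (j+1) u
            ≤ ∫ u in x..t, eD w t (fun j' => d j' t) k c (j+1) u * w (j+1) u := by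
          refine intervalIntegral.integral_mono_on hxt hintd hintE fun u hu => ?_
          have hih := ih u (hIcc hu) hu.2
          rw [← hj1] at hih
          have hodd1 : ¬Even (j+1) := by
            rw [Nat.even_iff] at hev ⊢
            omega
          exact mul_le_mul_of_nonneg_right (hih.2 hodd1) ((hw (j+1)).1 u (hIcc hu)).le
        linarith
      · intro hodd
        have hcmp : ∫ u in x..t, eD w t (fun j' => d j' t) k c (j+1) u * w (j+1) u
            ≤ ∫ u in x..t, d (j+1) u * w (j+1) u := by
          refine intervalIntegral.integral_mono_on hxt hintE hintd fun u hu => ?_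
          have hih := ih u (hIcc hu) hu.2
          rw [← hj1] at hih
          have hev1 : Even (j+1) := by
            rw [Nat.even_iff] at hodd ⊢
            omega
          exact mul_le_mul_of_nonneg_right (hih.1 hev1) ((hw (j+1)).1 u (hIcc hu)).le
        linarith

end Compare3
section GenL

variable {I : Set ℝ} {w : ℕ → ℝ → ℝ}

lemma eD_isGenL (hI : I.OrdConnected) (hw : IsGauge I w) {t : ℝ} (ht : t ∈ I)
    (a : ℕ → ℝ) (k : ℕ) (c : ℝ) :
    IsGenL I w k (fun y => eD w t a k c 0 y * w 0 y) (eD w t a k c) := by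
  constructor
  · intro x _; rfl
  · have hEc : eD w t a k c k = fun _ => c := funext (eD_top w t a k c)
    rw [hEc]
    exact ⟨fun x _ _ => tendsto_const_nhds, fun x _ _ => tendsto_const_nhds⟩
  · intro j _ z hz x hx
    exact eD_intervalIntegrable hI hw ht a k c (j+1) (j+1) hz hx
  · intro j hj z hz x hx
    have h1 := eD_succ w t a c hj x
    have h2 := eD_succ w t a c hj z
    have hsub := intervalIntegral.integral_interval_sub_left
      (eD_intervalIntegrable hI hw ht a k c (j+1) (j+1) ht hx)
      (eD_intervalIntegrable hI hw ht a k c (j+1) (j+1) ht hz)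
    linarith

end GenL
lemma isLD_of_eqOn_const {I : Set ℝ} {g : ℝ → ℝ} {C : ℝ} (h : ∀ x ∈ I, g x = C) :
    IsLD I g := by
  constructor
  · intro x hx _
    rw [h x hx]
    exact Filter.Tendsto.congr'
      (eventually_mem_nhdsWithin.mono fun y hy => (h y hy.1).symm) tendsto_const_nhds
  · intro x hx _
    rw [h x hx]
    exact Filter.Tendsto.congr'
      (eventually_mem_nhdsWithin.mono fun y hy => (h y hy.1).symm) tendsto_const_nhds

/-- Proposition `N_+^k`, part (i): for `k ≤ n`, the admissible set of
measures is characterized by the `w`-polynomials in `P_+^{≤k}`. -/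
theorem stmt_12 (I : Set ℝ) (hI : I.OrdConnected) (hIne : ∃ p ∈ I, ∃ q ∈ I, p < q)
    (w : ℕ → ℝ → ℝ) (hw : IsGauge I w)
    (k n : ℕ) (hk : 1 ≤ k) (hkn : k ≤ n)
    (G : Set (ℝ → ℝ))
    (hG1 : ∀ p : ℝ → ℝ,
      ((∃ dp, IsGenL I w n p dp ∧ ∃ c', ∀ x ∈ I, dp n x = c') ∧
        (∃ dd, MemF I w k n p dd)) → p ∈ G)
    (hG2 : ∀ t ∈ I, pplus w t 0 n ∈ G)
    (hG3 : ∀ f ∈ G, ∃ d, MemF I w k n f d)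
    (ν : Measure ℝ) :
    (∀ f ∈ G, (∫⁻ x in I, ENNReal.ofReal (-f x) ∂ν) ≠ ⊤) ↔
    (∀ (p : ℝ → ℝ) (dp : ℕ → ℝ → ℝ) (c' : ℝ), IsGenL I w k p dp →
      (∀ x ∈ I, dp k x = c') → 0 ≤ c' →
      (∫⁻ x in I, ENNReal.ofReal (-p x) ∂ν) ≠ ⊤) := by
  classical
  constructor
  · -- LHS → RHS: every element of `P_+^{≤k}` belongs to `G`.
    intro hL p dp c' hpgen hpc hc'0
    set dp' : ℕ → ℝ → ℝ := fun j => if j ≤ k then dp j else fun _ => 0 with hdp'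
    have hzero_int : ∀ j : ℕ, ∀ z x : ℝ,
        IntervalIntegrable (fun u => (0:ℝ) * w j u) volume z x := by
      intro j z x
      have : (fun u => (0:ℝ) * w j u) = fun _ => (0:ℝ) := by funext u; ring
      rw [this]
      exact intervalIntegrable_const
    have hgen' : IsGenL I w n p dp' := by
      constructor
      · intro x hx
        have h0 : dp' 0 = dp 0 := by simp [hdp', Nat.zero_le]
        rw [h0]
        exact hpgen.base x hx
      · by_cases hnk : n ≤ k
        · refine isLD_of_eqOn_const (C := c') fun x hx => ?_
          have hnk' : n = k := le_antisymm hnk hkn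
          simp only [hdp', if_pos hnk]
          rw [hnk']
          exact hpc x hx
        · refine isLD_of_eqOn_const (C := 0) fun x _ => ?_
          simp only [hdp', if_neg hnk]
      · intro j _ z hz x hx
        by_cases hjk : j + 1 ≤ k
        · simp only [hdp', if_pos hjk]
          exact hpgen.integrable j (by omega) z hz x hx
        · simp only [hdp', if_neg hjk]
          exact hzero_int (j+1) z x
      · intro j hj z hz x hx
        by_cases hjk : j + 1 ≤ k
        · simp only [hdp', if_pos hjk, if_pos (by omega : j ≤ k)]
          exact hpgen.deriv_eq j (by omega) z hz x hx
        · by_cases hjk2 : j ≤ k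
          · have hjeq : j = k := by omega
            subst hjeq
            simp only [hdp', if_pos (le_refl j), if_neg hjk, zero_mul,
              intervalIntegral.integral_zero, add_zero]
            rw [hpc x hx, hpc z hz]
          · simp only [hdp', if_neg hjk, if_neg hjk2, zero_mul,
              intervalIntegral.integral_zero, add_zero]
    have hmono' : ∀ j, k - 1 ≤ j → j ≤ n → MonotoneOn (dp' j) I := by
      intro j hj1 hj2
      by_cases hjk : j ≤ k
      · by_cases hjlt : j < k
        · -- j = k - 1
          have hjeq : j = k - 1 := by omega
          intro x hx y hy hxy
          simp only [hdp', if_pos hjk]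
          have hd := hpgen.deriv_eq j (by omega) x hx y hy
          have hnn : 0 ≤ ∫ u in x..y, dp (j+1) u * w (j+1) u := by
            refine intervalIntegral.integral_nonneg hxy fun u hu => ?_
            have huI : u ∈ I := hI.out hx hy hu
            have : dp (j+1) u = c' := by
              rw [show j+1 = k from by omega]
              exact hpc u huI
            rw [this]
            exact mul_nonneg hc'0 ((hw (j+1)).1 u huI).le
          linarith
        · -- j = k
          have hjeq : j = k := by omega
          subst hjeq
          intro x hx y hy _
          simp only [hdp', if_pos (le_refl j)]
          rw [hpc x hx, hpc y hy]
      · intro x _ y _ _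
        simp only [hdp', if_neg hjk]
        exact le_refl 0
    refine hL p (hG1 p ⟨⟨dp', hgen', ?_⟩, ⟨dp', hgen', hmono'⟩⟩)
    by_cases hnk : n ≤ k
    · refine ⟨c', fun x hx => ?_⟩
      have hnk' : n = k := le_antisymm hnk hkn
      simp only [hdp', if_pos hnk]
      rw [hnk']
      exact hpc x hx
    · exact ⟨0, fun x _ => by simp only [hdp', if_neg hnk]⟩
  · -- RHS → LHS: every `f ∈ G` is minorized on `I` by an element of `P_+^{≤k}`.
    intro hR f hfG
    obtain ⟨d, hf⟩ := hG3 f hfG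
    obtain ⟨p0, hp0, t, ht, hpt⟩ := hIne
    set c : ℝ := if Even k then 0 else d k t with hc
    have h0 : 0 ≤ d k t := dk_nonneg hI hw hk hkn hf hp0 ht hpt
    have hc0 : 0 ≤ c := by
      rw [hc]; split_ifs with h
      · exact le_refl 0
      · exact h0
    have hcle : ∀ u ∈ I, t ≤ u → c ≤ d k u := by
      intro u hu htu
      have : d k t ≤ d k u := hf.2 k (by omega) hkn ht hu htu
      rw [hc]; split_ifs with h
      · linarith
      · exact this
    have hcmp : ∀ x ∈ I, eD w t (fun j' => d j' t) k c 0 x ≤ d 0 x := by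
      intro x hx
      rcases le_total t x with htx | hxt
      · have := compare_right hI hw hk hkn hf ht hcle (k-1) x hx htx
        rwa [Nat.sub_self] at this
      · have hcE : Even k → c = 0 := fun h => by rw [hc, if_pos h]
        have hcO : ¬Even k → c = d k t := fun h => by rw [hc, if_neg h]
        have := compare_left hI hw hk hkn hf ht hcE hcO (k-1) x hx hxt
        rw [Nat.sub_self] at this
        exact this.1 Even.zero
    have hP := hR (fun y => eD w t (fun j' => d j' t) k c 0 y * w 0 y)
      (eD w t (fun j' => d j' t) k c) c (eD_isGenL hI hw ht _ k c)
      (fun x _ => eD_top w t _ k c x) hc0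
    refine ne_top_of_le_ne_top hP ?_
    refine setLIntegral_mono' hI.measurableSet fun x hx => ?_
    refine ENNReal.ofReal_le_ofReal (neg_le_neg ?_)
    rw [hf.1.base x hx]
    exact mul_le_mul_of_nonneg_right (hcmp x hx) ((hw 0).1 x hx).le

end
end

section
/- Assume k = n+1, k is odd, and a ∉ I. Then for every nonnegative Borel measure ν on I, the following are equivalent: (1) ν(f) > −∞ for every f ∈ F_+^{n+1:n}(I); (2) ν(p) ∈ ℝ for every p ∈ P^{≤n} and there exists ã ∈ I with ν((a, ã)) = 0. -/
open MeasureTheory Set Filter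
open scoped ENNReal

noncomputable section

open intervalIntegral

/-- `g` is measurable and bounded on every compact subinterval of `I` with endpoints in `I`. -/
def Adm (I : Set ℝ) (g : ℝ → ℝ) : Prop :=
  ∀ z ∈ I, ∀ x ∈ I, z ≤ x →
    AEMeasurable g (volume.restrict (Icc z x)) ∧ ∃ C, ∀ u ∈ Icc z x, |g u| ≤ C

lemma Adm.mul {I g h} (hg : Adm I g) (hh : Adm I h) : Adm I (fun u => g u * h u) := by
  intro z hz x hx hzx
  obtain ⟨hm1, C1, hb1⟩ := hg z hz x hx hzx
  obtain ⟨hm2, C2, hb2⟩ := hh z hz x hx hzx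
  refine ⟨hm1.mul hm2, |C1| * |C2| + 1, fun u hu => ?_⟩
  have h1 := hb1 u hu; have h2 := hb2 u hu
  have : |g u * h u| = |g u| * |h u| := abs_mul _ _
  nlinarith [abs_nonneg (g u), abs_nonneg (h u), abs_nonneg C1, abs_nonneg C2,
    le_abs_self C1, le_abs_self C2]

lemma Adm.neg {I g} (hg : Adm I g) : Adm I (fun u => -g u) := by
  intro z hz x hx hzx
  obtain ⟨hm, C, hb⟩ := hg z hz x hx hzx
  exact ⟨hm.neg, C, fun u hu => by simpa using hb u hu⟩

lemma adm_const {I : Set ℝ} (c : ℝ) : Adm I (fun _ => c) := by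
  intro z hz x hx hzx
  exact ⟨aemeasurable_const, |c|, fun u _ => le_rfl⟩

lemma Adm.intervalIntegrable {I g} (hg : Adm I g) {z x : ℝ} (hz : z ∈ I) (hx : x ∈ I) :
    IntervalIntegrable g volume z x := by
  have key : ∀ z' ∈ I, ∀ x' ∈ I, z' ≤ x' → IntervalIntegrable g volume z' x' := by
    intro z' hz' x' hx' h
    rw [intervalIntegrable_iff_integrableOn_Icc_of_le h]
    obtain ⟨hm, C, hb⟩ := hg z' hz' x' hx' h
    refine Integrable.mono' (g := fun _ => C) (integrableOn_const measure_Icc_lt_top.ne)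
      hm.aestronglyMeasurable ?_
    exact (ae_restrict_iff' measurableSet_Icc).2 (Eventually.of_forall fun u hu => by
      simpa using hb u hu)
  rcases le_total z x with h | h
  · exact key z hz x hx h
  · exact (key x hx z hz h).symm

/-- `w j` is admissible. -/
lemma adm_w {I : Set ℝ} (hI : I.OrdConnected) {w : ℕ → ℝ → ℝ} (hw : IsGauge I w) (j : ℕ) :
    Adm I (w j) := by
  intro z hz x hx hzx
  have hsub : Icc z x ⊆ I := hI.out hz hx
  constructor
  · -- measurability via indicator
    have hind : Measurable (I.indicator (w j)) := by
      have hIm : MeasurableSet I := hI.measurableSet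
      have hme : MeasurableEmbedding ((↑) : I → ℝ) := MeasurableEmbedding.subtype_coe hIm
      have := hme.measurable_extend (hw j).2.1 (measurable_const (a := (0:ℝ)))
      convert this using 1
      funext u
      by_cases hu : u ∈ I
      · rw [indicator_of_mem hu]
        have : u = ((⟨u, hu⟩ : I) : ℝ) := rfl
        rw [this, Subtype.val_injective.extend_apply]
      · rw [indicator_of_notMem hu, Function.extend_apply']
        rintro ⟨y, rfl⟩; exact hu y.2
    refine hind.aemeasurable.congr ?_
    refine (ae_restrict_iff' measurableSet_Icc).2 (Eventually.of_forall fun u hu => ?_)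
    rw [indicator_of_mem (hsub hu)]
  · obtain ⟨C, hC⟩ := (hw j).2.2 (Icc z x) hsub isCompact_Icc
    exact ⟨C, hC⟩


/-- continuity on `I` of a function given by an integral identity. -/
lemma continuousOn_of_integral_id {I : Set ℝ} (hI : I.OrdConnected)
    {h F : ℝ → ℝ}
    (hint : ∀ z ∈ I, ∀ x ∈ I, IntervalIntegrable h volume z x)
    (hF : ∀ z ∈ I, ∀ x ∈ I, F x = F z + ∫ u in z..x, h u) :
    ContinuousOn F I := by
  intro x hx
  -- choose lo hi in I with lo ≤ x ≤ hi and a nbhd U of x with I ∩ U ⊆ Icc lo hi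
  obtain ⟨lo, hlo, hlox, hi, hhi, hxhi, U, hU, hIU⟩ :
      ∃ lo ∈ I, lo ≤ x ∧ ∃ hi ∈ I, x ≤ hi ∧ ∃ U ∈ nhds x, I ∩ U ⊆ Icc lo hi := by
    by_cases hb : ∃ z ∈ I, z < x
    · obtain ⟨lo, hlo, hlox⟩ := hb
      by_cases ha : ∃ z ∈ I, x < z
      · obtain ⟨hi, hhi, hxhi⟩ := ha
        exact ⟨lo, hlo, hlox.le, hi, hhi, hxhi.le, Ioo lo hi, Ioo_mem_nhds hlox hxhi,
          fun u hu => ⟨hu.2.1.le, hu.2.2.le⟩⟩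
      · push_neg at ha
        exact ⟨lo, hlo, hlox.le, x, hx, le_rfl, Ioi lo, Ioi_mem_nhds hlox,
          fun u hu => ⟨hu.2.le, ha u hu.1⟩⟩
    · push_neg at hb
      by_cases ha : ∃ z ∈ I, x < z
      · obtain ⟨hi, hhi, hxhi⟩ := ha
        exact ⟨x, hx, le_rfl, hi, hhi, hxhi.le, Iio hi, Iio_mem_nhds hxhi,
          fun u hu => ⟨hb u hu.1, hu.2.le⟩⟩
      · push_neg at ha
        exact ⟨x, hx, le_rfl, x, hx, le_rfl, univ, univ_mem,
          fun u hu => ⟨hb u hu.1, ha u hu.1⟩⟩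
  -- F agrees with a primitive on Icc lo hi
  have hlohi : lo ≤ hi := hlox.trans hxhi
  have hcont : ContinuousOn (fun y => F lo + ∫ u in lo..y, h u) (Icc lo hi) := by
    have h1 : IntervalIntegrable h volume lo hi := hint lo hlo hi hhi
    have := continuousOn_primitive_interval' h1 (by
      rw [uIcc_of_le hlohi]; exact ⟨le_rfl, hlohi⟩)
    rw [uIcc_of_le hlohi] at this
    exact (continuousOn_const.add this)
  have heq : ∀ y ∈ I, F y = F lo + ∫ u in lo..y, h u := fun y hy => hF lo hlo y hy
  have hxmem : x ∈ Icc lo hi := ⟨hlox, hxhi⟩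
  have hcw : ContinuousWithinAt (fun y => F lo + ∫ u in lo..y, h u) (Icc lo hi) x :=
    hcont x hxmem
  have hcw2 : ContinuousWithinAt (fun y => F lo + ∫ u in lo..y, h u) (I ∩ U) x :=
    hcw.mono hIU
  have hcw3 : ContinuousWithinAt F (I ∩ U) x :=
    hcw2.congr (fun y hy => heq y hy.1) (heq x hx)
  have : ContinuousWithinAt F I x := by
    unfold ContinuousWithinAt
    rw [nhdsWithin_restrict' I hU]
    exact hcw3
  exact this

lemma ContinuousOn.adm' {I : Set ℝ} (hI : I.OrdConnected) {g : ℝ → ℝ}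
    (hg : ContinuousOn g I) :
    ∀ z ∈ I, ∀ x ∈ I, z ≤ x →
      AEMeasurable g (volume.restrict (Icc z x)) ∧ ∃ C, ∀ u ∈ Icc z x, |g u| ≤ C := by
  intro z hz x hx hzx
  have hsub : Icc z x ⊆ I := hI.out hz hx
  have hc : ContinuousOn g (Icc z x) := hg.mono hsub
  refine ⟨hc.aemeasurable measurableSet_Icc, ?_⟩
  obtain ⟨C, hC⟩ := isCompact_Icc.exists_bound_of_continuousOn hc
  exact ⟨C, fun u hu => by simpa using hC u hu⟩
/-- Iterated integrals from a base point `t0`, with added constants `base i`. -/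
def iterI (w : ℕ → ℝ → ℝ) (n : ℕ) (t0 : ℝ) (g : ℝ → ℝ) (base : ℕ → ℝ) : ℕ → ℝ → ℝ
  | 0 => g
  | (i + 1) => fun x => base i + ∫ u in t0..x, iterI w n t0 g base i u * w (n - i) u

/-- Reversed iterated integrals, up to a base point `τ`. -/
def iterR (w : ℕ → ℝ → ℝ) (n : ℕ) (τ : ℝ) (g : ℝ → ℝ) : ℕ → ℝ → ℝ
  | 0 => g
  | (i + 1) => fun x => ∫ u in x..τ, iterR w n τ g i u * w (n - i) u

section Iter

variable {I : Set ℝ} {w : ℕ → ℝ → ℝ}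
  {n : ℕ} {t0 τ : ℝ} {g : ℝ → ℝ} {base : ℕ → ℝ}

lemma iterI_adm (hI : I.OrdConnected) (hw : IsGauge I w) (ht0 : t0 ∈ I) (hg : Adm I g) : ∀ i, Adm I (iterI w n t0 g base i) := by
  intro i
  induction i with
  | zero => exact hg
  | succ i ih =>
    have hint : Adm I (fun u => iterI w n t0 g base i u * w (n - i) u) :=
      ih.mul (adm_w hI hw (n - i))
    have hcont : ContinuousOn (fun x => ∫ u in t0..x,
        iterI w n t0 g base i u * w (n - i) u) I := by
      refine continuousOn_of_integral_id hI
        (fun z hz x hx => hint.intervalIntegrable hz hx) ?_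
      intro z hz x hx
      rw [← intervalIntegral.integral_add_adjacent_intervals
        (hint.intervalIntegrable ht0 hz) (hint.intervalIntegrable hz hx)]
    have : ContinuousOn (iterI w n t0 g base (i + 1)) I := by
      show ContinuousOn (fun x => base i + _) I
      exact continuousOn_const.add hcont
    exact this.adm' hI

lemma iterI_eq (hI : I.OrdConnected) (hw : IsGauge I w) (ht0 : t0 ∈ I) (hg : Adm I g) (i : ℕ) {z x : ℝ} (hz : z ∈ I) (hx : x ∈ I) :
    iterI w n t0 g base (i + 1) x = iterI w n t0 g base (i + 1) z +
      ∫ u in z..x, iterI w n t0 g base i u * w (n - i) u := by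
  have hint : Adm I (fun u => iterI w n t0 g base i u * w (n - i) u) :=
    (iterI_adm hI hw ht0 hg i).mul (adm_w hI hw (n - i))
  show base i + _ = (base i + _) + _
  rw [← intervalIntegral.integral_add_adjacent_intervals
    (hint.intervalIntegrable ht0 hz) (hint.intervalIntegrable hz hx)]
  ring

lemma iterR_adm (hI : I.OrdConnected) (hw : IsGauge I w) (hτ : τ ∈ I) (hg : Adm I g) : ∀ i, Adm I (iterR w n τ g i) := by
  intro i
  induction i with
  | zero => exact hg
  | succ i ih =>
    have hint : Adm I (fun u => iterR w n τ g i u * w (n - i) u) :=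
      ih.mul (adm_w hI hw (n - i))
    have : ContinuousOn (iterR w n τ g (i + 1)) I := by
      show ContinuousOn (fun x => ∫ u in x..τ, iterR w n τ g i u * w (n - i) u) I
      have : (fun x => ∫ u in x..τ, iterR w n τ g i u * w (n - i) u) =
          (fun x => -∫ u in τ..x, iterR w n τ g i u * w (n - i) u) := by
        funext x
        rw [intervalIntegral.integral_symm]
      rw [this]
      refine ContinuousOn.neg ?_
      refine continuousOn_of_integral_id hI
        (fun z hz x hx => hint.intervalIntegrable hz hx) ?_
      intro z hz x hx
      rw [← intervalIntegral.integral_add_adjacent_intervals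
        (hint.intervalIntegrable hτ hz) (hint.intervalIntegrable hz hx)]
    exact this.adm' hI

lemma iterR_zero_of_ge (hI : I.OrdConnected) (hτ : τ ∈ I) (h0 : ∀ u, τ ≤ u → g u = 0) :
    ∀ i, ∀ x ∈ I, τ ≤ x → iterR w n τ g i x = 0 := by
  intro i
  induction i with
  | zero => exact fun x _ hx => h0 x hx
  | succ i ih =>
    intro x hx hτx
    show (∫ u in x..τ, iterR w n τ g i u * w (n - i) u) = 0
    have : EqOn (fun u => iterR w n τ g i u * w (n - i) u) 0 (uIcc x τ) := by
      intro u hu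
      rw [uIcc_of_ge hτx] at hu
      have huI : u ∈ I := hI.out hτ hx hu
      simp only [Pi.zero_apply, ih u huI hu.1, zero_mul]
    rw [intervalIntegral.integral_congr this]
    exact intervalIntegral.integral_zero

lemma iterR_nonneg (hI : I.OrdConnected) (hw : IsGauge I w) (hτ : τ ∈ I) (h0 : ∀ u, τ ≤ u → g u = 0) (hg : ∀ u ∈ I, 0 ≤ g u)
    (hadm : Adm I g) :
    ∀ i, ∀ x ∈ I, 0 ≤ iterR w n τ g i x := by
  intro i
  induction i with
  | zero => exact hg
  | succ i ih =>
    intro x hx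
    rcases le_total τ x with h | h
    · rw [iterR_zero_of_ge hI hτ h0 (i+1) x hx h]
    · show 0 ≤ ∫ u in x..τ, iterR w n τ g i u * w (n - i) u
      refine intervalIntegral.integral_nonneg h ?_
      intro u hu
      have huI : u ∈ I := hI.out hx hτ hu
      exact mul_nonneg (ih u huI) (le_of_lt ((hw (n - i)).1 u huI))

lemma iterR_pos (hI : I.OrdConnected) (hw : IsGauge I w) (hτ : τ ∈ I) (h0 : ∀ u, τ ≤ u → g u = 0) (hgnn : ∀ u ∈ I, 0 ≤ g u)
    (hgpos : ∀ u ∈ I, u < τ → 0 < g u) (hadm : Adm I g) :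
    ∀ i, ∀ x ∈ I, x < τ → 0 < iterR w n τ g i x := by
  intro i
  induction i with
  | zero => exact hgpos
  | succ i ih =>
    intro x hx hxτ
    show 0 < ∫ u in x..τ, iterR w n τ g i u * w (n - i) u
    refine intervalIntegral.intervalIntegral_pos_of_pos_on
      (((iterR_adm hI hw hτ hadm i).mul (adm_w hI hw (n - i))).intervalIntegrable hx hτ)
      ?_ hxτ
    intro u hu
    have huI : u ∈ I := hI.out hx hτ ⟨hu.1.le, hu.2.le⟩
    exact mul_pos (ih u huI hu.2) ((hw (n - i)).1 u huI)
end Iter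

lemma dir_mpr {I : Set ℝ} (hI : I.OrdConnected) {w : ℕ → ℝ → ℝ} (hw : IsGauge I w)
    {n : ℕ} {ν : Measure ℝ}
    (hpoly : ∀ p : ℝ → ℝ, (∃ dp, IsGenL I w n p dp ∧ ∃ c', ∀ x ∈ I, dp n x = c') →
        (∫⁻ x in I, ENNReal.ofReal |p x| ∂ν) ≠ ⊤)
    {a' : ℝ} (ha' : a' ∈ I) (hnull : ν (I ∩ Iio a') = 0)
    (f : ℝ → ℝ) (hf : ∃ d, MemF I w (n + 1) n f d) :
    (∫⁻ x in I, ENNReal.ofReal (-f x) ∂ν) ≠ ⊤ := by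
  obtain ⟨d, hgen, hmono⟩ := hf
  have hmono' : MonotoneOn (d n) I := hmono n (by omega) le_rfl
  set E : ℕ → ℝ → ℝ := iterI w n a' (fun _ => d n a') (fun i => d (n - i - 1) a') with hE
  have hEadm : ∀ i, Adm I (E i) := iterI_adm hI hw ha' (adm_const _)
  set p : ℝ → ℝ := fun x => E n x * w 0 x with hp
  -- p is a w-polynomial
  have hgenp : IsGenL I w n p (fun j => E (n - j)) := by
    constructor
    · intro x hx; rfl
    · constructor
      · intro x _ _
        have : E (n - n) = fun _ => d n a' := by simp [hE, iterI]
        rw [this]; exact tendsto_const_nhds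
      · intro x _ _
        have : E (n - n) = fun _ => d n a' := by simp [hE, iterI]
        rw [this]; exact tendsto_const_nhds
    · intro j hj z hz x hx
      exact ((hEadm (n - (j + 1))).mul (adm_w hI hw (j + 1))).intervalIntegrable hz hx
    · intro j hj z hz x hx
      have h1 : n - j = (n - j - 1) + 1 := by omega
      have h2 : n - (n - j - 1) = j + 1 := by omega
      have h3 : n - (j + 1) = n - j - 1 := by omega
      have := iterI_eq (n := n) (base := fun i => d (n - i - 1) a') hI hw ha'
        (adm_const (d n a')) (n - j - 1) hz hx
      rw [h2] at this
      show E (n - j) x = E (n - j) z + ∫ u in z..x, E (n - (j + 1)) u * w (j + 1) u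
      rw [h1, h3]
      exact this
  -- comparison: E i ≤ d (n - i) on I ∩ [a', ∞)
  have hcmp : ∀ i ≤ n, ∀ x ∈ I, a' ≤ x → E i x ≤ d (n - i) x := by
    intro i
    induction i with
    | zero =>
      intro _ x hx hax
      have : E 0 x = d n a' := rfl
      rw [this, Nat.sub_zero]
      exact hmono' ha' hx hax
    | succ i ih =>
      intro hin x hx hax
      have hjlt : n - i - 1 < n := by omega
      have h2 : n - i - 1 + 1 = n - i := by omega
      have hdeq := hgen.deriv_eq (n - i - 1) hjlt a' ha' x hx
      rw [h2] at hdeq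
      have hEeq := iterI_eq (n := n) (base := fun i => d (n - i - 1) a') hI hw ha'
        (adm_const (d n a')) i ha' hx
      have hE0 : E (i + 1) a' = d (n - i - 1) a' := by
        show (fun x => d (n - i - 1) a' + ∫ u in a'..x, E i u * w (n - i) u) a' = _
        simp
      have hle : (∫ u in a'..x, E i u * w (n - i) u) ≤
          ∫ u in a'..x, d (n - i) u * w (n - i) u := by
        have hintE : IntervalIntegrable (fun u => E i u * w (n - i) u) volume a' x :=
          ((hEadm i).mul (adm_w hI hw (n - i))).intervalIntegrable ha' hx
        have hintd : IntervalIntegrable (fun u => d (n - i) u * w (n - i) u) volume a' x := by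
          have := hgen.integrable (n - i - 1) hjlt a' ha' x hx
          rwa [h2] at this
        refine intervalIntegral.integral_mono_on hax hintE hintd ?_
        intro u hu
        have huI : u ∈ I := hI.out ha' hx hu
        exact mul_le_mul_of_nonneg_right (ih (by omega) u huI hu.1)
          (le_of_lt ((hw (n - i)).1 u huI))
      calc E (i + 1) x = E (i + 1) a' + ∫ u in a'..x, E i u * w (n - i) u := hEeq
        _ = d (n - i - 1) a' + ∫ u in a'..x, E i u * w (n - i) u := by rw [hE0]
        _ ≤ d (n - i - 1) a' + ∫ u in a'..x, d (n - i) u * w (n - i) u := by linarith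
        _ = d (n - i - 1) x := hdeq.symm
        _ = d (n - (i + 1)) x := by rw [Nat.sub_sub]
  have hfinp := hpoly p ⟨fun j => E (n - j), hgenp, d n a', fun x _ => by
    have hEnn : E (n - n) = fun _ => d n a' := by simp [hE, iterI]
    show E (n - n) x = d n a'
    rw [hEnn]⟩
  -- split the integral
  have hIm : MeasurableSet I := hI.measurableSet
  have hsplit : ν.restrict I ≤ ν.restrict (I ∩ Iio a') + ν.restrict (I ∩ Ici a') := by
    have : I = (I ∩ Iio a') ∪ (I ∩ Ici a') := by
      rw [← inter_union_distrib_left, Iio_union_Ici, inter_univ]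
    nth_rewrite 1 [this]
    exact Measure.restrict_union_le _ _
  have h1 : (∫⁻ x in I ∩ Iio a', ENNReal.ofReal (-f x) ∂ν) = 0 := by
    rw [Measure.restrict_eq_zero.2 hnull]; simp
  have h2 : (∫⁻ x in I ∩ Ici a', ENNReal.ofReal (-f x) ∂ν) ≤
      ∫⁻ x in I, ENNReal.ofReal |p x| ∂ν := by
    have hle : (∫⁻ x in I ∩ Ici a', ENNReal.ofReal (-f x) ∂ν) ≤
        ∫⁻ x in I ∩ Ici a', ENNReal.ofReal |p x| ∂ν := by
      refine lintegral_mono_ae ?_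
      refine (ae_restrict_iff' (hIm.inter measurableSet_Ici)).2
        (Eventually.of_forall fun x hx => ?_)
      have hfp : p x ≤ f x := by
        have := hcmp n le_rfl x hx.1 hx.2
        rw [Nat.sub_self] at this
        have hfx : f x = d 0 x * w 0 x := hgen.base x hx.1
        rw [hfx, hp]
        exact mul_le_mul_of_nonneg_right this (le_of_lt ((hw 0).1 x hx.1))
      refine ENNReal.ofReal_le_ofReal ?_
      calc -f x ≤ -p x := by linarith
        _ ≤ |p x| := neg_le_abs _
    exact hle.trans (lintegral_mono' (Measure.restrict_mono inter_subset_left le_rfl) le_rfl)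
  have hlt : (∫⁻ x in I, ENNReal.ofReal (-f x) ∂ν) < ⊤ :=
    calc (∫⁻ x in I, ENNReal.ofReal (-f x) ∂ν)
      ≤ ∫⁻ x, ENNReal.ofReal (-f x) ∂(ν.restrict (I ∩ Iio a') + ν.restrict (I ∩ Ici a')) :=
        lintegral_mono' hsplit le_rfl
    _ = (∫⁻ x in I ∩ Iio a', ENNReal.ofReal (-f x) ∂ν) +
        ∫⁻ x in I ∩ Ici a', ENNReal.ofReal (-f x) ∂ν := lintegral_add_measure _ _ _
    _ ≤ 0 + ∫⁻ x in I, ENNReal.ofReal |p x| ∂ν := by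
        rw [h1]; exact add_le_add le_rfl h2
    _ < ⊤ := by
        rw [zero_add]
        exact lt_top_iff_ne_top.2 hfinp
  exact hlt.ne
lemma gauge_aemeasurable {I : Set ℝ} (hI : I.OrdConnected) {w : ℕ → ℝ → ℝ}
    (hw : IsGauge I w) (j : ℕ) (μ : Measure ℝ) {s : Set ℝ} (hs : MeasurableSet s)
    (hsI : s ⊆ I) : AEMeasurable (w j) (μ.restrict s) := by
  have hind : Measurable (I.indicator (w j)) := by
    have hIm : MeasurableSet I := hI.measurableSet
    have hme : MeasurableEmbedding ((↑) : I → ℝ) := MeasurableEmbedding.subtype_coe hIm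
    have := hme.measurable_extend (hw j).2.1 (measurable_const (a := (0:ℝ)))
    convert this using 1
    funext u
    by_cases hu : u ∈ I
    · rw [indicator_of_mem hu]
      have : u = ((⟨u, hu⟩ : I) : ℝ) := rfl
      rw [this, Subtype.val_injective.extend_apply]
    · rw [indicator_of_notMem hu, Function.extend_apply']
      rintro ⟨y, rfl⟩; exact hu y.2
  refine hind.aemeasurable.congr ?_
  refine (ae_restrict_iff' hs).2 (Eventually.of_forall fun u hu => ?_)
  rw [indicator_of_mem (hsI hu)]

lemma dir_mp_poly {I : Set ℝ} (hI : I.OrdConnected) {w : ℕ → ℝ → ℝ} (hw : IsGauge I w)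
    {n : ℕ} {ν : Measure ℝ}
    (hF : ∀ f : ℝ → ℝ, (∃ d, MemF I w (n + 1) n f d) →
        (∫⁻ x in I, ENNReal.ofReal (-f x) ∂ν) ≠ ⊤)
    (p : ℝ → ℝ) (hp : ∃ dp, IsGenL I w n p dp ∧ ∃ c', ∀ x ∈ I, dp n x = c') :
    (∫⁻ x in I, ENNReal.ofReal |p x| ∂ν) ≠ ⊤ := by
  obtain ⟨dp, hgen, c', hc⟩ := hp
  have hIm : MeasurableSet I := hI.measurableSet
  have hmono : MonotoneOn (dp n) I := fun x hx y hy _ => by rw [hc x hx, hc y hy]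
  -- p itself is in F
  have hA : (∫⁻ x in I, ENNReal.ofReal (-p x) ∂ν) ≠ ⊤ :=
    hF p ⟨dp, hgen, fun j hj hj' => by
      have : j = n := by omega
      subst this; exact hmono⟩
  -- -p is in F
  have hgenneg : IsGenL I w n (fun x => -p x) (fun j x => -(dp j x)) := by
    constructor
    · intro x hx; rw [hgen.base x hx]; ring
    · exact ⟨fun x hx h => ((hgen.ld.1 x hx h).neg),
        fun x hx h => ((hgen.ld.2 x hx h).neg)⟩
    · intro j hj z hz x hx
      have := (hgen.integrable j hj z hz x hx).neg
      simp only [neg_mul]; exact this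
    · intro j hj z hz x hx
      have h0 := hgen.deriv_eq j hj z hz x hx
      have : (∫ u in z..x, -(dp (j+1) u) * w (j+1) u) =
          -∫ u in z..x, dp (j+1) u * w (j+1) u := by
        rw [← intervalIntegral.integral_neg]
        congr 1; funext u; ring
      rw [this, h0]; ring
  have hB : (∫⁻ x in I, ENNReal.ofReal (p x) ∂ν) ≠ ⊤ := by
    have := hF (fun x => -p x) ⟨fun j x => -(dp j x), hgenneg, fun j hj hj' => by
      have : j = n := by omega
      subst this
      intro x hx y hy hxy
      simp only [hc x hx, hc y hy, le_refl]⟩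
    simpa using this
  -- measurability of p on I
  have hcont0 : ContinuousOn (dp 0) I := by
    rcases Nat.eq_zero_or_pos n with h | h
    · subst h
      exact continuousOn_const.congr (fun y hy => hc y hy)
    · exact continuousOn_of_integral_id hI
        (fun z hz x hx => hgen.integrable 0 h z hz x hx)
        (fun z hz x hx => hgen.deriv_eq 0 h z hz x hx)
  have hw0 : AEMeasurable (w 0) (ν.restrict I) :=
    gauge_aemeasurable hI hw 0 ν hIm subset_rfl
  have hpm : AEMeasurable p (ν.restrict I) := by
    refine (((hcont0.aemeasurable hIm).mono_measure
      (Measure.restrict_mono subset_rfl le_rfl)).mul hw0).congr ?_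
    refine (ae_restrict_iff' hIm).2 (Eventually.of_forall fun x hx => ?_)
    exact (hgen.base x hx).symm
  have hpm' : AEMeasurable (fun x => ENNReal.ofReal (p x)) (ν.restrict I) :=
    ENNReal.measurable_ofReal.comp_aemeasurable hpm
  -- combine
  have hle : (∫⁻ x in I, ENNReal.ofReal |p x| ∂ν) ≤
      (∫⁻ x in I, (ENNReal.ofReal (p x) + ENNReal.ofReal (-p x)) ∂ν) := by
    refine lintegral_mono fun x => ?_
    rcases le_total 0 (p x) with h | h
    · rw [abs_of_nonneg h]; exact self_le_add_right _ _
    · rw [abs_of_nonpos h]; exact self_le_add_left _ _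
  have hadd : (∫⁻ x in I, (ENNReal.ofReal (p x) + ENNReal.ofReal (-p x)) ∂ν) =
      (∫⁻ x in I, ENNReal.ofReal (p x) ∂ν) + (∫⁻ x in I, ENNReal.ofReal (-p x) ∂ν) :=
    lintegral_add_left' hpm' _
  intro htop
  rw [htop] at hle
  rw [hadd] at hle
  exact (ENNReal.add_ne_top.2 ⟨hB, hA⟩) (top_le_iff.1 hle)
lemma exists_coinitial_seq {I : Set ℝ} (hne : I.Nonempty) (hnomin : ¬∃ x, IsLeast I x) :
    ∃ u : ℕ → ℝ, (∀ m, u m ∈ I) ∧ ∀ x ∈ I, ∃ m, u (m + 1) < x := by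
  by_cases hb : BddBelow I
  · set α := sInf I with hα
    have hαI : α ∉ I := fun hmem => hnomin ⟨α, hmem, fun y hy => csInf_le hb hy⟩
    have hsel : ∀ m : ℕ, ∃ y ∈ I, y < α + 1 / (m + 1) := by
      intro m
      have hpos : (0:ℝ) < 1 / (m + 1) := by positivity
      obtain ⟨y, hy, hlt⟩ := Real.lt_sInf_add_pos hne hpos
      exact ⟨y, hy, hlt⟩
    choose u hu hult using hsel
    refine ⟨u, hu, fun x hx => ?_⟩
    have hαx : α < x := lt_of_le_of_ne (csInf_le hb hx) (fun h => hαI (h ▸ hx))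
    obtain ⟨m, hm⟩ := exists_nat_one_div_lt (sub_pos.2 hαx)
    refine ⟨m, ?_⟩
    have h1 : (1:ℝ) / (m + 1 + 1) ≤ 1 / (m + 1) := by
      apply one_div_le_one_div_of_le
      · positivity
      · linarith
    have := hult (m + 1)
    push_cast at this ⊢
    nlinarith [hm]
  · rw [not_bddBelow_iff] at hb
    have hsel : ∀ m : ℕ, ∃ y ∈ I, y < -(m : ℝ) := fun m => hb (-(m:ℝ))
    choose u hu hult using hsel
    refine ⟨u, hu, fun x hx => ?_⟩
    obtain ⟨m, hm⟩ := exists_nat_ge (-x)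
    refine ⟨m, (hult (m + 1)).trans_le ?_⟩
    push_cast
    linarith

lemma exists_t_seq {I : Set ℝ} (hIne : ∃ p ∈ I, ∃ q ∈ I, p < q)
    (hnomin : ¬∃ x, IsLeast I x) :
    ∃ t : ℕ → ℝ, (∀ m, t m ∈ I) ∧ StrictAnti t ∧ (∀ x ∈ I, ∃ m, t m < x) ∧
      ∃ q ∈ I, t 0 < q := by
  obtain ⟨p, hp, q, hq, hpq⟩ := hIne
  obtain ⟨u, hu, hus⟩ := exists_coinitial_seq ⟨p, hp⟩ hnomin
  have hsel : ∀ y ∈ I, ∃ z ∈ I, z < y := by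
    intro y hy
    by_contra hcon
    push_neg at hcon
    exact hnomin ⟨y, hy, fun z hz => le_of_not_gt (fun h => absurd (hcon z hz) (not_le_of_gt h))⟩
  choose sel hsel1 hsel2 using hsel
  -- recursive construction
  let step : ℕ → {y : ℝ // y ∈ I} → {y : ℝ // y ∈ I} := fun m prev =>
    ⟨sel (min prev.1 (u (m + 1)))
        (by rcases min_choice prev.1 (u (m + 1)) with h | h <;> rw [h]
            exacts [prev.2, hu (m + 1)]),
     hsel1 _ _⟩
  let T : ℕ → {y : ℝ // y ∈ I} := fun m => Nat.rec ⟨p, hp⟩ step m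
  have hTlt : ∀ m, (T (m + 1)).1 < min (T m).1 (u (m + 1)) := fun m => hsel2 _ _
  refine ⟨fun m => (T m).1, fun m => (T m).2, ?_, ?_, q, hq, hpq⟩
  · apply strictAnti_nat_of_succ_lt
    intro m
    exact (hTlt m).trans_le (min_le_left _ _)
  · intro x hx
    obtain ⟨m, hm⟩ := hus x hx
    exact ⟨m + 1, ((hTlt m).trans_le (min_le_right _ _)).trans hm⟩
lemma iterR_contOn {I : Set ℝ} (hI : I.OrdConnected) {w : ℕ → ℝ → ℝ} (hw : IsGauge I w)
    {n : ℕ} {τ : ℝ} {g : ℝ → ℝ} (hτ : τ ∈ I) (hadm : Adm I g) (i : ℕ) :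
    ContinuousOn (iterR w n τ g (i + 1)) I := by
  have hint : Adm I (fun u => iterR w n τ g i u * w (n - i) u) :=
    (iterR_adm hI hw hτ hadm i).mul (adm_w hI hw (n - i))
  show ContinuousOn (fun x => ∫ u in x..τ, iterR w n τ g i u * w (n - i) u) I
  have : (fun x => ∫ u in x..τ, iterR w n τ g i u * w (n - i) u) =
      (fun x => -∫ u in τ..x, iterR w n τ g i u * w (n - i) u) := by
    funext x
    rw [intervalIntegral.integral_symm]
  rw [this]
  refine ContinuousOn.neg ?_
  refine continuousOn_of_integral_id hI
    (fun z hz x hx => hint.intervalIntegrable hz hx) ?_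
  intro z hz x hx
  rw [← intervalIntegral.integral_add_adjacent_intervals
    (hint.intervalIntegrable hτ hz) (hint.intervalIntegrable hz hx)]

section Gpkg

variable {I : Set ℝ} {t : ℕ → ℝ} {c : ℕ → ℝ}

/-- index of the first `t m` lying at or below `x`. -/
def MxF (t : ℕ → ℝ) (x : ℝ) : ℕ := sInf {m | t m ≤ x}

/-- the nonincreasing step function `G`. -/
def GF (t : ℕ → ℝ) (c : ℕ → ℝ) (x : ℝ) : ℝ := ∑ m ∈ Finset.range (MxF t x), c m

lemma MxF_mem (hne : {m | t m ≤ x}.Nonempty) : t (MxF t x) ≤ x := Nat.sInf_mem hne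

lemma MxF_gt {x : ℝ} {m : ℕ} (hm : m < MxF t x) : x < t m :=
  lt_of_not_ge fun h => Nat.notMem_of_lt_sInf hm h

lemma MxF_anti {x y : ℝ} (hne : {m | t m ≤ x}.Nonempty) (hxy : x ≤ y) :
    MxF t y ≤ MxF t x := by
  have h : t (MxF t x) ≤ y := (MxF_mem hne).trans hxy
  exact Nat.sInf_le h

lemma GF_nonneg (hc : ∀ m, 0 ≤ c m) (x : ℝ) : 0 ≤ GF t c x :=
  Finset.sum_nonneg fun m _ => hc m

lemma GF_anti {x y : ℝ} (hc : ∀ m, 0 ≤ c m) (hne : {m | t m ≤ x}.Nonempty) (hxy : x ≤ y) :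
    GF t c y ≤ GF t c x :=
  Finset.sum_le_sum_of_subset_of_nonneg
    (Finset.range_subset_range.2 (MxF_anti hne hxy)) (fun m _ _ => hc m)

lemma GF_ge (hts : StrictAnti t) (hc : ∀ m, 0 ≤ c m) {x : ℝ} {M : ℕ}
    (hne : {m | t m ≤ x}.Nonempty) (hx : x < t M) : c M ≤ GF t c x := by
  have hMlt : M < MxF t x := by
    by_contra hle
    push_neg at hle
    exact absurd (le_trans (hts.antitone hle) (MxF_mem hne)) (not_le.2 hx)
  exact Finset.single_le_sum (fun m _ => hc m) (Finset.mem_range.2 hMlt)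

lemma GF_zero_of_ge {x : ℝ} (h : t 0 ≤ x) : GF t c x = 0 := by
  have : MxF t x = 0 := Nat.eq_zero_of_le_zero (Nat.sInf_le h)
  rw [GF, this]
  simp

lemma GF_eqOn (hI : I.OrdConnected) (hts : StrictAnti t)
    (hne : ∀ x ∈ I, {m | t m ≤ x}.Nonempty) {z x : ℝ} (hz : z ∈ I) (hx : x ∈ I) :
    ∀ u ∈ Icc z x, GF t c u =
      ∑ m ∈ Finset.range (MxF t z), (if u < t m then c m else 0) := by
  intro u hu
  have huI : u ∈ I := hI.out hz hx hu
  have hMu : MxF t u ≤ MxF t z := MxF_anti (hne z hz) hu.1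
  have h1 : GF t c u = ∑ m ∈ Finset.range (MxF t u), (if u < t m then c m else 0) := by
    rw [GF]
    refine Finset.sum_congr rfl fun m hm => ?_
    rw [if_pos (MxF_gt (Finset.mem_range.1 hm))]
  rw [h1]
  refine Finset.sum_subset (Finset.range_subset_range.2 hMu) ?_
  intro m hm hnm
  have h2 : MxF t u ≤ m := le_of_not_gt fun hlt => hnm (Finset.mem_range.2 hlt)
  have h3 : t m ≤ u := le_trans (hts.antitone h2) (MxF_mem (hne u huI))
  rw [if_neg (not_lt.2 h3)]

lemma GF_adm (hI : I.OrdConnected) (hts : StrictAnti t) (hc : ∀ m, 0 ≤ c m)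
    (hne : ∀ x ∈ I, {m | t m ≤ x}.Nonempty) : Adm I (GF t c) := by
  intro z hz x hx hzx
  have hEq := GF_eqOn (c := c) hI hts hne hz hx
  constructor
  · have hmeas : Measurable (fun u => ∑ m ∈ Finset.range (MxF t z),
        (if u < t m then c m else 0)) := by
      refine Finset.measurable_sum _ fun m _ => ?_
      exact Measurable.ite measurableSet_Iio measurable_const measurable_const
    refine hmeas.aemeasurable.congr ?_
    refine (ae_restrict_iff' measurableSet_Icc).2 (Eventually.of_forall fun u hu => ?_)
    exact (hEq u hu).symm
  · refine ⟨∑ m ∈ Finset.range (MxF t z), c m, fun u hu => ?_⟩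
    rw [hEq u hu]
    refine le_trans (Finset.abs_sum_le_sum_abs _ _) (Finset.sum_le_sum fun m _ => ?_)
    split
    · rw [abs_of_nonneg (hc m)]
    · simpa using hc m

lemma GF_right_const (hts : StrictAnti t) {x : ℝ}
    (hne : {m | t m ≤ x}.Nonempty) :
    ∃ δ, x < δ ∧ ∀ y, x ≤ y → y < δ → GF t c y = GF t c x := by
  cases hM : MxF t x with
  | zero =>
    refine ⟨x + 1, lt_add_one x, fun y hxy _ => ?_⟩
    have ht0 : t 0 ≤ x := by have := MxF_mem hne; rwa [hM] at this
    rw [GF_zero_of_ge (ht0.trans hxy), GF_zero_of_ge ht0]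
  | succ m =>
    have hxm : x < t m := MxF_gt (hM ▸ m.lt_succ_self)
    refine ⟨t m, hxm, fun y hxy hym => ?_⟩
    have hMy : MxF t y = m + 1 := by
      refine le_antisymm ?_ ?_
      · have h1 : t (m + 1) ≤ x := by have := MxF_mem hne; rwa [hM] at this
        exact Nat.sInf_le (h1.trans hxy)
      · refine le_csInf ⟨m + 1, (by
          have := MxF_mem hne; rw [hM] at this; exact this.trans hxy)⟩ ?_
        intro k hk
        by_contra hlt
        push_neg at hlt
        have : t m ≤ t k := hts.antitone (Nat.lt_succ_iff.1 hlt)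
        exact absurd (le_trans this hk) (not_le.2 hym)
    rw [GF, GF, hMy, hM]

end Gpkg
lemma dir_mp_null {I : Set ℝ} (hI : I.OrdConnected) (hIne : ∃ p ∈ I, ∃ q ∈ I, p < q)
    {w : ℕ → ℝ → ℝ} (hw : IsGauge I w) {n : ℕ} (hodd : Odd (n + 1))
    (hnomin : ¬∃ x, IsLeast I x) {ν : Measure ℝ}
    (hF : ∀ f : ℝ → ℝ, (∃ d, MemF I w (n + 1) n f d) →
        (∫⁻ x in I, ENNReal.ofReal (-f x) ∂ν) ≠ ⊤) :
    ∃ a' ∈ I, ν (I ∩ Iio a') = 0 := by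
  by_contra hcon
  push_neg at hcon
  obtain ⟨t, htI, hts, htco, q, hqI, htq⟩ := exists_t_seq hIne hnomin
  have hIm : MeasurableSet I := hI.measurableSet
  have hne' : ∀ x ∈ I, {m | t m ≤ x}.Nonempty := fun x hx =>
    (htco x hx).imp fun m hm => hm.le
  -- base indicator functions
  set gM : ℕ → ℝ → ℝ := fun M x => if x < t M then (1:ℝ) else 0 with hgM
  have hgAdm : ∀ M, Adm I (gM M) := by
    intro M z hz x hx hzx
    refine ⟨(Measurable.ite measurableSet_Iio measurable_const measurable_const).aemeasurable,
      1, fun u hu => ?_⟩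
    simp only [gM]
    split <;> simp
  have hg0 : ∀ M, ∀ u, t M ≤ u → gM M u = 0 := fun M u h => if_neg (not_lt.2 h)
  have hgnn : ∀ M, ∀ u, u ∈ I → 0 ≤ gM M u := by
    intro M u _
    simp only [gM]; split <;> norm_num
  have hgpos : ∀ M, ∀ u ∈ I, u < t M → 0 < gM M u := by
    intro M u _ h
    simp only [gM, if_pos h]; norm_num
  set S : ℕ → ℕ → ℝ → ℝ := fun M => iterR w n (t M) (gM M) with hS
  set A : ℕ → Set ℝ := fun M => I ∩ Iio (t M) with hA
  have hAm : ∀ M, MeasurableSet (A M) := fun M => hIm.inter measurableSet_Iio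
  set ε : ℕ → ℝ≥0∞ :=
    fun M => ∫⁻ x in A M, ENNReal.ofReal (S M n x * w 0 x) ∂ν with hε
  have hSpos : ∀ M, ∀ x ∈ I, x < t M → 0 < S M n x := fun M =>
    iterR_pos hI hw (htI M) (hg0 M) (hgnn M) (hgpos M) (hgAdm M) n
  have hSadm : ∀ M i, Adm I (S M i) := fun M => iterR_adm hI hw (htI M) (hgAdm M)
  -- positivity of ε
  have hεpos : ∀ M, ε M ≠ 0 := by
    intro M h0
    have hSm : AEMeasurable (S M n) (ν.restrict (A M)) := by
      cases n with
      | zero =>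
        exact (Measurable.ite measurableSet_Iio measurable_const
          measurable_const).aemeasurable
      | succ k =>
        exact ((iterR_contOn hI hw (htI M) (hgAdm M) k).mono
          inter_subset_left).aemeasurable (hAm M)
    have hw0 : AEMeasurable (w 0) (ν.restrict (A M)) :=
      gauge_aemeasurable hI hw 0 ν (hAm M) inter_subset_left
    have hae : AEMeasurable (fun x => ENNReal.ofReal (S M n x * w 0 x))
        (ν.restrict (A M)) :=
      ENNReal.measurable_ofReal.comp_aemeasurable (hSm.mul hw0)
    have hzero := (lintegral_eq_zero_iff' hae).1 h0
    have hnull : (ν.restrict (A M)) {x | ¬ (ENNReal.ofReal (S M n x * w 0 x) = 0)} = 0 := by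
      simpa [Filter.EventuallyEq, ae_iff] using hzero
    rw [Measure.restrict_apply' (hAm M)] at hnull
    have hsub : A M ⊆ {x | ¬ (ENNReal.ofReal (S M n x * w 0 x) = 0)} ∩ A M := by
      intro x hx
      refine ⟨?_, hx⟩
      have h1 : 0 < S M n x * w 0 x :=
        mul_pos (hSpos M x hx.1 hx.2) ((hw 0).1 x hx.1)
      exact ne_of_gt (ENNReal.ofReal_pos.2 h1)
    exact hcon (t M) (htI M) (le_antisymm (le_trans (measure_mono hsub) hnull.le)
      zero_le)
  -- the coefficients
  set c : ℕ → ℝ := fun M => if ε M = ⊤ then 1 else (M + 1) / (ε M).toReal with hc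
  have hcpos : ∀ M, 0 < c M := by
    intro M
    simp only [c]
    split
    · norm_num
    · next h => exact div_pos (by positivity) (ENNReal.toReal_pos (hεpos M) h)
  have hcnn : ∀ M, 0 ≤ c M := fun M => (hcpos M).le
  -- the step function G
  set G : ℝ → ℝ := GF t c with hG
  have hGAdm : Adm I G := GF_adm hI hts hcnn hne'
  -- the function f
  set D : ℕ → ℝ → ℝ := iterI w n (t 0) (fun x => -G x) (fun _ => 0) with hD
  have hD0 : D 0 = fun x => -G x := rfl
  have hDsucc : ∀ i x, D (i + 1) x = 0 + ∫ u in (t 0)..x, D i u * w (n - i) u :=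
    fun i x => rfl
  have hDAdm : ∀ i, Adm I (D i) := iterI_adm hI hw (htI 0) hGAdm.neg
  set f : ℝ → ℝ := fun x => D n x * w 0 x with hf
  -- f ∈ F
  have hld : IsLD I (D 0) := by
    rw [hD0]
    constructor
    · intro x hx _
      obtain ⟨δ, hxδ, hconst⟩ := GF_right_const (c := c) hts (hne' x hx)
      have hev : ∀ᶠ y in nhdsWithin x (I ∩ Ioi x), -G x = -G y := by
        have h1 : Iio δ ∈ nhdsWithin x (I ∩ Ioi x) :=
          mem_nhdsWithin_of_mem_nhds (Iio_mem_nhds hxδ)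
        filter_upwards [h1, self_mem_nhdsWithin] with y hy1 hy2
        rw [hG, hconst y (le_of_lt hy2.2) hy1]
      exact Tendsto.congr' hev tendsto_const_nhds
    · intro x hx hmax
      have ht0x : t 0 < x := lt_of_lt_of_le htq (hmax q hqI)
      have hev : ∀ᶠ y in nhdsWithin x (I ∩ Iio x), -G x = -G y := by
        have h1 : Ioi (t 0) ∈ nhdsWithin x (I ∩ Iio x) :=
          mem_nhdsWithin_of_mem_nhds (Ioi_mem_nhds ht0x)
        filter_upwards [h1] with y hy1
        rw [hG, GF_zero_of_ge (le_of_lt hy1), GF_zero_of_ge (le_of_lt ht0x)]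
      exact Tendsto.congr' hev tendsto_const_nhds
  have hgen : IsGenL I w n f (fun j => D (n - j)) := by
    constructor
    · intro x hx; rfl
    · have hnn : n - n = 0 := Nat.sub_self n
      rw [hnn]; exact hld
    · intro j hj z hz x hx
      exact ((hDAdm (n - (j + 1))).mul (adm_w hI hw (j + 1))).intervalIntegrable hz hx
    · intro j hj z hz x hx
      have h1 : n - j = (n - j - 1) + 1 := by omega
      have h2 : n - (n - j - 1) = j + 1 := by omega
      have h3 : n - (j + 1) = n - j - 1 := by omega
      have := iterI_eq (n := n) (base := fun _ => (0:ℝ)) hI hw (htI 0)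
        hGAdm.neg (n - j - 1) hz hx
      rw [h2] at this
      show D (n - j) x = D (n - j) z + ∫ u in z..x, D (n - (j + 1)) u * w (j + 1) u
      rw [h1, h3]
      exact this
  have hmem : MemF I w (n + 1) n f (fun j => D (n - j)) := by
    refine ⟨hgen, fun j hj hj' => ?_⟩
    have : j = n := by omega
    subst this
    simp only [Nat.sub_self]
    rw [hD0]
    intro x hx y hy hxy
    simp only [neg_le_neg_iff]
    exact GF_anti hcnn (hne' x hx) hxy
  -- key pointwise estimate
  have hkey : ∀ M i, ∀ x ∈ I, x ≤ t 0 →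
      c M * S M i x ≤ (-1:ℝ)^(i+1) * D i x := by
    intro M i
    induction i with
    | zero =>
      intro x hx hxt
      rw [pow_one, hD0]
      show c M * gM M x ≤ -1 * -G x
      rcases lt_or_ge x (t M) with h | h
      · rw [hgM]
        simp only [if_pos h, mul_one]
        have := GF_ge hts hcnn (hne' x hx) h
        rw [hG]; linarith
      · rw [hgM]
        simp only [if_neg (not_lt.2 h), mul_zero]
        have := GF_nonneg (t := t) hcnn x
        rw [hG]; linarith
    | succ i ih =>
      intro x hx hxt
      have htM0 : t M ≤ t 0 := hts.antitone (Nat.zero_le M)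
      have hintCS : ∀ z' ∈ I, ∀ x' ∈ I, IntervalIntegrable
          (fun u => (c M * S M i u) * w (n - i) u) volume z' x' :=
        fun z' hz' x' hx' =>
          (((adm_const (c M)).mul (hSadm M i)).mul (adm_w hI hw (n - i))).intervalIntegrable
            hz' hx'
      have hintD : ∀ z' ∈ I, ∀ x' ∈ I, IntervalIntegrable
          (fun u => ((-1:ℝ)^(i+1) * D i u) * w (n - i) u) volume z' x' :=
        fun z' hz' x' hx' =>
          (((adm_const ((-1:ℝ)^(i+1))).mul (hDAdm i)).mul (adm_w hI hw (n - i))).intervalIntegrable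
            hz' hx'
      -- step 1 : c M * S M (i+1) x = ∫ x..t M
      have hstep1 : c M * S M (i+1) x =
          ∫ u in x..(t M), (c M * S M i u) * w (n - i) u := by
        have : S M (i+1) x = ∫ u in x..(t M), S M i u * w (n - i) u := rfl
        rw [this, ← intervalIntegral.integral_const_mul]
        congr 1
        funext u
        ring
      -- step 2 : extend to t 0
      have hstep2 : (∫ u in x..(t M), (c M * S M i u) * w (n - i) u) =
          ∫ u in x..(t 0), (c M * S M i u) * w (n - i) u := by
        rw [← intervalIntegral.integral_add_adjacent_intervals
          (hintCS x hx (t M) (htI M)) (hintCS (t M) (htI M) (t 0) (htI 0))]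
        have hzero : (∫ u in (t M)..(t 0), (c M * S M i u) * w (n - i) u) = 0 := by
          have heq : EqOn (fun u => (c M * S M i u) * w (n - i) u) 0
              (uIcc (t M) (t 0)) := by
            intro u hu
            rw [uIcc_of_le htM0] at hu
            have huI : u ∈ I := hI.out (htI M) (htI 0) hu
            have : S M i u = 0 := iterR_zero_of_ge hI (htI M) (hg0 M) i u huI hu.1
            simp [this]
          rw [intervalIntegral.integral_congr heq]
          exact intervalIntegral.integral_zero
        rw [hzero, add_zero]
      -- step 3 : compare with D
      have hstep3 : (∫ u in x..(t 0), (c M * S M i u) * w (n - i) u) ≤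
          ∫ u in x..(t 0), ((-1:ℝ)^(i+1) * D i u) * w (n - i) u := by
        refine intervalIntegral.integral_mono_on hxt (hintCS x hx (t 0) (htI 0))
          (hintD x hx (t 0) (htI 0)) ?_
        intro u hu
        have huI : u ∈ I := hI.out hx (htI 0) hu
        exact mul_le_mul_of_nonneg_right (ih u huI hu.2)
          (le_of_lt ((hw (n - i)).1 u huI))
      -- step 4 : pull out the sign
      have hstep4 : (∫ u in x..(t 0), ((-1:ℝ)^(i+1) * D i u) * w (n - i) u) =
          (-1:ℝ)^(i+2) * D (i+1) x := by
        have h1 : (∫ u in x..(t 0), ((-1:ℝ)^(i+1) * D i u) * w (n - i) u) =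
            (-1:ℝ)^(i+1) * ∫ u in x..(t 0), D i u * w (n - i) u := by
          rw [← intervalIntegral.integral_const_mul]
          congr 1
          funext u
          ring
        have h2 : D (i+1) x = -∫ u in x..(t 0), D i u * w (n - i) u := by
          rw [hDsucc i x, zero_add, intervalIntegral.integral_symm]
        rw [h1, h2]
        ring
      calc c M * S M (i+1) x
          = ∫ u in x..(t M), (c M * S M i u) * w (n - i) u := hstep1
        _ = ∫ u in x..(t 0), (c M * S M i u) * w (n - i) u := hstep2
        _ ≤ ∫ u in x..(t 0), ((-1:ℝ)^(i+1) * D i u) * w (n - i) u := hstep3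
        _ = (-1:ℝ)^(i+2) * D (i+1) x := hstep4
  -- conclusion
  have hfin := hF f ⟨fun j => D (n - j), hmem⟩
  have hbound : ∀ M : ℕ, ENNReal.ofReal (M + 1) ≤ ∫⁻ x in I, ENNReal.ofReal (-f x) ∂ν := by
    intro M
    have hmono1 : (∫⁻ x in A M, ENNReal.ofReal (c M * (S M n x * w 0 x)) ∂ν) ≤
        ∫⁻ x in A M, ENNReal.ofReal (-f x) ∂ν := by
      refine lintegral_mono_ae ?_
      refine (ae_restrict_iff' (hAm M)).2 (Eventually.of_forall fun x hx => ?_)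
      refine ENNReal.ofReal_le_ofReal ?_
      have hxt0 : x ≤ t 0 := le_trans hx.2.le (hts.antitone (Nat.zero_le M))
      have h1 := hkey M n x hx.1 hxt0
      rw [Odd.neg_one_pow hodd] at h1
      have hw0 : 0 ≤ w 0 x := ((hw 0).1 x hx.1).le
      have h2 : (c M * S M n x) * w 0 x ≤ (-1 * D n x) * w 0 x :=
        mul_le_mul_of_nonneg_right h1 hw0
      calc c M * (S M n x * w 0 x) = (c M * S M n x) * w 0 x := by ring
        _ ≤ (-1 * D n x) * w 0 x := h2
        _ = -f x := by rw [hf]; ring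
    have hmono2 : (∫⁻ x in A M, ENNReal.ofReal (-f x) ∂ν) ≤
        ∫⁻ x in I, ENNReal.ofReal (-f x) ∂ν :=
      lintegral_mono' (Measure.restrict_mono inter_subset_left le_rfl) le_rfl
    have heq : (∫⁻ x in A M, ENNReal.ofReal (c M * (S M n x * w 0 x)) ∂ν) =
        ENNReal.ofReal (c M) * ε M := by
      rw [hε]
      rw [← lintegral_const_mul' (ENNReal.ofReal (c M)) _ ENNReal.ofReal_ne_top]
      congr 1
      funext x
      rw [← ENNReal.ofReal_mul (hcnn M)]
    have hge : ENNReal.ofReal (M + 1) ≤ ENNReal.ofReal (c M) * ε M := by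
      by_cases hT : ε M = ⊤
      · rw [hT]
        have hc1 : c M = 1 := by rw [hc]; simp [hT]
        rw [hc1]
        simp [ENNReal.mul_top]
      · have hεR : 0 < (ε M).toReal := ENNReal.toReal_pos (hεpos M) hT
        have hc' : c M = (M + 1) / (ε M).toReal := by rw [hc]; simp [hT]
        set r := (ε M).toReal with hr
        have hεr : ε M = ENNReal.ofReal r := (ENNReal.ofReal_toReal hT).symm
        rw [hc', hεr, ← ENNReal.ofReal_mul (div_nonneg (by positivity) hεR.le),
          div_mul_cancel₀ _ (ne_of_gt hεR)]
    calc ENNReal.ofReal (M + 1) ≤ ENNReal.ofReal (c M) * ε M := hge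
      _ = ∫⁻ x in A M, ENNReal.ofReal (c M * (S M n x * w 0 x)) ∂ν := heq.symm
      _ ≤ ∫⁻ x in A M, ENNReal.ofReal (-f x) ∂ν := hmono1
      _ ≤ ∫⁻ x in I, ENNReal.ofReal (-f x) ∂ν := hmono2
  obtain ⟨k, hk⟩ := ENNReal.exists_nat_gt hfin
  have h1 := hbound k
  have h2 : (k : ℝ≥0∞) ≤ ENNReal.ofReal ((k : ℝ) + 1) := by
    calc (k : ℝ≥0∞) = ENNReal.ofReal (k : ℝ) := (ENNReal.ofReal_natCast k).symm
      _ ≤ ENNReal.ofReal ((k : ℝ) + 1) := ENNReal.ofReal_le_ofReal (by linarith)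
  exact absurd (le_trans h2 h1) (not_le.2 hk)

/-- Proposition `N_+^k`, part (iii): the exceptional case `k = n+1`,
`k` odd, `a ∉ I`: characterization of the admissible measures for `F_+^{n+1:n}(I)`. -/
theorem stmt_13 (I : Set ℝ) (hI : I.OrdConnected) (hIne : ∃ p ∈ I, ∃ q ∈ I, p < q)
    (w : ℕ → ℝ → ℝ) (hw : IsGauge I w)
    (n : ℕ) (hodd : Odd (n + 1))
    (hnomin : ¬∃ x, IsLeast I x)
    (ν : Measure ℝ) :
    (∀ f : ℝ → ℝ, (∃ d, MemF I w (n + 1) n f d) →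
        (∫⁻ x in I, ENNReal.ofReal (-f x) ∂ν) ≠ ⊤) ↔
    ((∀ p : ℝ → ℝ, (∃ dp, IsGenL I w n p dp ∧ ∃ c', ∀ x ∈ I, dp n x = c') →
        (∫⁻ x in I, ENNReal.ofReal |p x| ∂ν) ≠ ⊤) ∧
      ∃ a' ∈ I, ν (I ∩ Iio a') = 0) := by
  constructor
  · intro hF
    exact ⟨fun p hp => dir_mp_poly hI hw hF p hp,
      dir_mp_null hI hIne hw hodd hnomin hF⟩
  · rintro ⟨hpoly, a', ha', hnull⟩ f hf
    exact dir_mpr hI hw hpoly ha' hnull f hf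

end
end
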